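/- arXiv:1512.00218 — 7 statements merged into one kernel-verified Lean document; each statement's English description precedes it below -/
import Mathlib

section
/- The function K_0(x) = exp(-1/(1-x^2)) for |x| < 1 and K_0(x) = 0 otherwise satisfies: for every β > 0 and every integer j with 1 ≤ j ≤ ⌊β⌋, there exists a constant C(β,j) such that |K_0^{(j)}(x)| ≤ C(β,j) |K_0(x)|^{(β-j)/β} for all x ∈ ℝ. -/
open Real Polynomial Filter Set

noncomputable def K0 : ℝ → ℝ := fun x => if |x| < 1 then Real.exp (-1 / (1 - x ^ 2)) else 0

lemma K0_eq : K0 = fun x => expNegInvGlue (1 - x ^ 2) := by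
  funext x
  simp only [K0, expNegInvGlue]
  rcases lt_or_ge |x| 1 with h | h
  · rw [if_pos h, if_neg (by nlinarith [sq_abs x, abs_nonneg x])]
    rw [neg_div, one_div]
  · rw [if_neg (not_lt.mpr h), if_pos (by nlinarith [sq_abs x, abs_nonneg x])]

lemma K0_contDiff : ContDiff ℝ ((⊤ : ℕ∞) : WithTop ℕ∞) K0 := by
  rw [K0_eq]
  have h : ContDiff ℝ ((⊤ : ℕ∞) : WithTop ℕ∞) (fun x : ℝ => 1 - x ^ 2) :=
    contDiff_const.sub (contDiff_id.pow 2)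
  exact expNegInvGlue.contDiff.comp h

lemma K0_key (n : ℕ) : ∃ (p : Polynomial ℝ) (k : ℕ), ∀ x ∈ Set.Ioo (-1:ℝ) 1,
    iteratedDeriv n K0 x = p.eval x / (1 - x ^ 2) ^ (k + 1) * Real.exp (-1 / (1 - x ^ 2)) := by
  induction n with
  | zero =>
    refine ⟨1 - Polynomial.X ^ 2, 0, fun x hx => ?_⟩
    have hu : (0:ℝ) < 1 - x ^ 2 := by nlinarith [hx.1, hx.2]
    have hax : |x| < 1 := abs_lt.mpr ⟨hx.1, hx.2⟩
    simp only [iteratedDeriv_zero, K0, if_pos hax]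
    rw [eval_sub, eval_one, eval_pow, eval_X, pow_one, div_self hu.ne']
    ring
  | succ n ih =>
    obtain ⟨p, k, hp⟩ := ih
    refine ⟨derivative p * (1 - Polynomial.X ^ 2) ^ 2
        + Polynomial.C (2 * (k + 1) : ℝ) * Polynomial.X * p * (1 - Polynomial.X ^ 2)
        - 2 * Polynomial.X * p, k + 2, fun x hx => ?_⟩
    have hu : (0:ℝ) < 1 - x ^ 2 := by nlinarith [hx.1, hx.2]
    have hu0 : (1 - x ^ 2) ≠ 0 := hu.ne'
    have hev : iteratedDeriv n K0 =ᶠ[nhds x]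
        (fun y => p.eval y * Real.exp (-1 / (1 - y ^ 2)) / (1 - y ^ 2) ^ (k + 1)) := by
      filter_upwards [isOpen_Ioo.mem_nhds hx] with y hy
      rw [hp y hy]; ring
    have h1 : HasDerivAt (fun y : ℝ => 1 - y ^ 2) (-(2 * x)) x := by
      simpa using (hasDerivAt_pow 2 x).const_sub 1
    have h2 : HasDerivAt (fun y : ℝ => -1 / (1 - y ^ 2)) (-(2 * x) / (1 - x ^ 2) ^ 2) x := by
      have := (h1.fun_inv hu0).fun_neg
      simp only [neg_div, one_div] at this ⊢
      simpa using this
    have h3 := h2.exp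
    have h4 : HasDerivAt (fun y : ℝ => p.eval y) (p.derivative.eval x) x := p.hasDerivAt x
    have h5 := h4.fun_mul h3
    have h6 : HasDerivAt (fun y : ℝ => (1 - y ^ 2) ^ (k + 1))
        ((k + 1 : ℕ) * (1 - x ^ 2) ^ k * (-(2 * x))) x := by
      simpa using h1.fun_pow (k + 1)
    have h7 := h5.fun_div h6 (pow_ne_zero _ hu0)
    rw [iteratedDeriv_succ, hev.deriv_eq, h7.deriv]
    simp only [eval_sub, eval_add, eval_mul, eval_pow, eval_C, eval_X, eval_one, eval_ofNat]
    field_simp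
    push_cast
    ring


lemma K0_deriv_zero_of_gt (n : ℕ) {x : ℝ} (hx : 1 < |x|) : iteratedDeriv n K0 x = 0 := by
  have hev : K0 =ᶠ[nhds x] (fun _ => (0:ℝ)) := by
    have ho : IsOpen {y : ℝ | 1 < |y|} := isOpen_lt continuous_const continuous_abs
    filter_upwards [ho.mem_nhds hx] with y hy
    simp only [K0, if_neg (not_lt.mpr hy.le)]
  rw [hev.iteratedDeriv_eq n]
  have : iteratedDeriv n (fun _ : ℝ => (0:ℝ)) = fun _ => 0 := by
    ext y
    rw [iteratedDeriv]
    simp [iteratedFDeriv_zero_fun]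
  simp [this]

lemma K0_deriv_zero_of_ge (n : ℕ) {x : ℝ} (hx : 1 ≤ |x|) : iteratedDeriv n K0 x = 0 := by
  rcases eq_or_lt_of_le hx with h | h
  · have hc : Continuous (iteratedDeriv n K0) :=
      K0_contDiff.continuous_iteratedDeriv n (by exact_mod_cast le_top)
    have habs : x = 1 ∨ x = -1 := by
      rcases abs_eq (by norm_num : (0:ℝ) ≤ 1) |>.mp h.symm with h1 | h1
      · exact Or.inl h1
      · exact Or.inr h1
    rcases habs with rfl | rfl
    · have ht : Tendsto (iteratedDeriv n K0) (nhdsWithin 1 (Set.Ioi 1))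
          (nhds (iteratedDeriv n K0 1)) :=
        (hc.continuousAt.continuousWithinAt).tendsto
      have ht0 : Tendsto (iteratedDeriv n K0) (nhdsWithin 1 (Set.Ioi 1)) (nhds 0) := by
        apply Tendsto.congr' _ tendsto_const_nhds
        filter_upwards [self_mem_nhdsWithin] with y hy
        exact (K0_deriv_zero_of_gt n (by rw [abs_of_pos (by linarith [Set.mem_Ioi.mp hy])]; exact hy)).symm
      exact tendsto_nhds_unique ht ht0
    · have ht : Tendsto (iteratedDeriv n K0) (nhdsWithin (-1) (Set.Iio (-1)))
          (nhds (iteratedDeriv n K0 (-1))) :=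
        (hc.continuousAt.continuousWithinAt).tendsto
      have ht0 : Tendsto (iteratedDeriv n K0) (nhdsWithin (-1) (Set.Iio (-1))) (nhds 0) := by
        apply Tendsto.congr' _ tendsto_const_nhds
        filter_upwards [self_mem_nhdsWithin] with y hy
        have hy' : y < -1 := hy
        exact (K0_deriv_zero_of_gt n (by rw [abs_of_neg (by linarith)]; linarith)).symm
      exact tendsto_nhds_unique ht ht0
  · exact K0_deriv_zero_of_gt n h

theorem stmt_0 (β : ℝ) (hβ : 0 < β) (j : ℕ) (hj1 : 1 ≤ j) (hjβ : (j : ℝ) < β) :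
    ∃ C : ℝ, 0 < C ∧ ∀ x : ℝ,
      |iteratedDeriv j K0 x| ≤ C * |K0 x| ^ ((β - j) / β) := by
  have hj0 : (0:ℝ) < j := by exact_mod_cast Nat.lt_of_lt_of_le Nat.zero_lt_one hj1
  set θ : ℝ := (β - j) / β with hθ
  set c : ℝ := j / β with hcdef
  have hθpos : 0 < θ := div_pos (by linarith) hβ
  have hcpos : 0 < c := div_pos hj0 hβ
  obtain ⟨p, k, hp⟩ := K0_key j
  obtain ⟨M, hM⟩ : ∃ M, ∀ x ∈ Set.Icc (-1:ℝ) 1, |p.eval x| ≤ M := by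
    obtain ⟨M, hM⟩ := isCompact_Icc.exists_bound_of_continuousOn
      (s := Set.Icc (-1:ℝ) 1) p.continuous.continuousOn
    exact ⟨M, fun x hx => hM x hx⟩
  set M' : ℝ := max M 0 with hM'def
  set C : ℝ := (M' + 1) * (k + 1).factorial / c ^ (k + 1) with hCdef
  have hCpos : 0 < C := by
    have : (0:ℝ) ≤ M' := le_max_right _ _
    positivity
  refine ⟨C, hCpos, fun x => ?_⟩
  by_cases hx : |x| < 1
  · have hxIoo : x ∈ Set.Ioo (-1:ℝ) 1 := by
      rcases abs_lt.mp hx with ⟨h1, h2⟩; exact ⟨h1, h2⟩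
    set u : ℝ := 1 - x ^ 2 with hudef
    have hu : (0:ℝ) < u := by nlinarith [hxIoo.1, hxIoo.2]
    have hK : K0 x = Real.exp (-1 / u) := by simp only [K0, if_pos hx, hudef]
    have hpe : |p.eval x| ≤ M' :=
      le_trans (hM x (Set.mem_Icc.mpr ⟨hxIoo.1.le, hxIoo.2.le⟩)) (le_max_left _ _)
    have hM'0 : (0:ℝ) ≤ M' := le_max_right _ _
    rw [hp x hxIoo, hK, abs_of_pos (Real.exp_pos _), ← Real.exp_mul,
      abs_mul, abs_div, abs_of_pos (pow_pos hu _), Real.abs_exp]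
    have hE : Real.exp (-(c / u)) ≤ (k + 1).factorial * u ^ (k + 1) / c ^ (k + 1) := by
      have h := Real.pow_div_factorial_le_exp (x := c / u) (le_of_lt (div_pos hcpos hu)) (k + 1)
      have hpos : (0:ℝ) < (c / u) ^ (k + 1) / (k + 1).factorial := by positivity
      calc Real.exp (-(c / u)) = (Real.exp (c / u))⁻¹ := by rw [Real.exp_neg]
        _ ≤ ((c / u) ^ (k + 1) / (k + 1).factorial)⁻¹ := by
            exact inv_anti₀ hpos h
        _ = (k + 1).factorial * u ^ (k + 1) / c ^ (k + 1) := by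
            rw [div_pow]
            field_simp
    have hsplit : Real.exp (-1 / u) = Real.exp (-1 / u * θ) * Real.exp (-(c / u)) := by
      rw [← Real.exp_add]
      congr 1
      rw [hθ, hcdef]
      field_simp
      ring
    rw [hsplit]
    have hkey : |p.eval x| / u ^ (k + 1) * Real.exp (-(c / u)) ≤ C := by
      have h1 : |p.eval x| * Real.exp (-(c / u))
          ≤ M' * ((k + 1).factorial * u ^ (k + 1) / c ^ (k + 1)) :=
        mul_le_mul hpe hE (Real.exp_pos _).le hM'0
      have h2 : |p.eval x| / u ^ (k + 1) * Real.exp (-(c / u))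
          = |p.eval x| * Real.exp (-(c / u)) / u ^ (k + 1) := by ring
      rw [h2]
      rw [div_le_iff₀ (by positivity)]
      calc |p.eval x| * Real.exp (-(c / u))
          ≤ M' * ((k + 1).factorial * u ^ (k + 1) / c ^ (k + 1)) := h1
        _ = M' * (k + 1).factorial / c ^ (k + 1) * u ^ (k + 1) := by ring
        _ ≤ C * u ^ (k + 1) := by
            apply mul_le_mul_of_nonneg_right _ (by positivity)
            rw [hCdef]
            have hF : (0:ℝ) < (k + 1).factorial := by positivity
            gcongr
            linarith
    calc |p.eval x| / u ^ (k + 1) * (Real.exp (-1 / u * θ) * Real.exp (-(c / u)))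
        = |p.eval x| / u ^ (k + 1) * Real.exp (-(c / u)) * Real.exp (-1 / u * θ) := by ring
      _ ≤ C * Real.exp (-1 / u * θ) :=
          mul_le_mul_of_nonneg_right hkey (Real.exp_pos _).le
  · rw [K0_deriv_zero_of_ge j (not_lt.mp hx), abs_zero]
    positivity
end

section
/- Let β > 0 and let f : [0,1] → ℝ be a non-negative function in the class H^β, i.e. f is ⌊β⌋-times differentiable with |f^{(j)}(x)| ≤ ‖f‖^{j/β} · f(x)^{(β-j)/β} for all x ∈ [0,1] and 1 ≤ j ≤ ⌊β⌋, where ‖f‖ := ‖f‖_{H^β} is a fixed finite constant, and the ⌊β⌋-th derivative is (β-⌊β⌋)-Hölder with constant at most ‖f‖. Let a > 0 satisfy (e^a - 1) + a^β/⌊β⌋! ≤ 1/2. Then for all x ∈ [0,1] and all h with x + h ∈ [0,1] and |h| ≤ a·(f(x)/‖f‖)^{1/β}, one has |f(x+h) - f(x)| ≤ f(x)/2; in particular f(x)/2 ≤ f(x+h) ≤ 3f(x)/2. -/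
open Real Set

lemma myIterWithin {f : ℝ → ℝ} {N : ℕ} (hf : ContDiff ℝ N f) {s : Set ℝ}
    (hs : UniqueDiffOn ℝ s) {n : ℕ} (hn : n ≤ N) :
    ∀ x ∈ s, iteratedDerivWithin n f s x = iteratedDeriv n f x := by
  induction n with
  | zero => intro x hx; simp [iteratedDerivWithin_zero, iteratedDeriv_zero]
  | succ n IH =>
    intro x hx
    rw [iteratedDerivWithin_succ, iteratedDeriv_succ]
    rw [derivWithin_congr (fun y hy => IH (Nat.le_of_succ_le hn) y hy) (IH (Nat.le_of_succ_le hn) x hx)]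
    exact ((hf.differentiable_iteratedDeriv n (by exact_mod_cast hn)).differentiableAt).derivWithin (hs x hx)

lemma core_est (β : ℝ) (hβ : 0 < β) (n : ℕ) (f : ℝ → ℝ) (R : ℝ) (hR : 0 < R)
    (hf : ContDiff ℝ (n+1 : ℕ) f)
    (x h : ℝ) (hh : 0 < h) (hfx : 0 < f x)
    (hkβ : ((n+1 : ℕ) : ℝ) < β)
    (hd : ∀ j : ℕ, 1 ≤ j → j ≤ n+1 →
      |iteratedDeriv j f x| ≤ R ^ ((j : ℝ) / β) * f x ^ ((β - j) / β))
    (hHol : ∀ y ∈ Icc x (x+h),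
      |iteratedDeriv (n+1) f y - iteratedDeriv (n+1) f x| ≤ R * |y - x| ^ (β - ((n+1 : ℕ) : ℝ)))
    (a : ℝ) (ha : 0 < a) (hha : h ≤ a * (f x / R) ^ (1/β)) :
    |f (x+h) - f x| ≤ ((Real.exp a - 1) + a ^ β / (Nat.factorial (n+1))) * f x := by
  have hxx : x < x + h := by linarith
  have hud := uniqueDiffOn_Icc hxx
  have hEq : ∀ m : ℕ, m ≤ n+1 → ∀ y ∈ Icc x (x+h),
      iteratedDerivWithin m f (Icc x (x+h)) y = iteratedDeriv m f y :=
    fun m hm => myIterWithin hf hud hm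
  -- Taylor
  have hcd : ContDiffOn ℝ n f (Icc x (x+h)) :=
    (hf.of_le (by exact_mod_cast Nat.le_succ n)).contDiffOn
  have hdif : Differentiable ℝ (iteratedDeriv n f) :=
    hf.differentiable_iteratedDeriv n (by exact_mod_cast Nat.lt_succ_self n)
  have hdiff : DifferentiableOn ℝ (iteratedDerivWithin n f (Icc x (x+h))) (Ioo x (x+h)) := by
    refine (hdif.differentiableOn).congr fun y hy => ?_
    exact hEq n (Nat.le_succ n) y (Ioo_subset_Icc_self hy)
  obtain ⟨ξ, hξ, hTay⟩ := taylor_mean_remainder_lagrange hxx.ne (by rwa [Set.uIcc_of_le hxx.le])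
    (by rwa [Set.uIcc_of_le hxx.le, Set.uIoo_of_le hxx.le])
  rw [Set.uIcc_of_le hxx.le] at hTay
  rw [Set.uIoo_of_le hxx.le] at hξ
  -- rewrite Taylor polynomial
  have hsum : taylorWithinEval f n (Icc x (x+h)) x (x+h) =
      ∑ j ∈ Finset.range (n+1), (j.factorial : ℝ)⁻¹ * h ^ j * iteratedDeriv j f x := by
    rw [taylor_within_apply]
    refine Finset.sum_congr rfl fun j hj => ?_
    rw [hEq j (le_of_lt (Finset.mem_range.mp hj)) x (left_mem_Icc.mpr hxx.le), smul_eq_mul,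
      add_sub_cancel_left]
  rw [hsum, hEq (n+1) le_rfl ξ (Ioo_subset_Icc_self hξ), add_sub_cancel_left] at hTay
  have hfr : (0:ℝ) ≤ f x / R := by positivity
  -- termwise bound
  have key_j : ∀ j : ℕ, 1 ≤ j → j ≤ n+1 → |iteratedDeriv j f x| * h^j ≤ a^j * f x := by
    intro j h1 h2
    have e1 : (a * (f x / R) ^ (1/β))^j = a^j * (f x / R) ^ ((j:ℝ)/β) := by
      rw [mul_pow, ← Real.rpow_natCast ((f x / R) ^ (1/β)) j, ← Real.rpow_mul hfr]
      congr 2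
      ring
    have e2 : f x ^ ((β - j)/β) * f x ^ ((j:ℝ)/β) = f x := by
      rw [← Real.rpow_add hfx]
      have : (β - j)/β + (j:ℝ)/β = 1 := by field_simp; ring
      rw [this, Real.rpow_one]
    have hRp : (0:ℝ) < R ^ ((j:ℝ)/β) := Real.rpow_pos_of_pos hR _
    calc |iteratedDeriv j f x| * h^j
        ≤ (R ^ ((j:ℝ)/β) * f x ^ ((β - j)/β)) * (a * (f x / R)^(1/β))^j := by
          apply mul_le_mul (hd j h1 h2) (pow_le_pow_left₀ hh.le hha j) (by positivity) (by positivity)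
      _ = a^j * (f x ^ ((β - j)/β) * f x ^ ((j:ℝ)/β)) * (R^((j:ℝ)/β) / R^((j:ℝ)/β)) := by
          rw [e1, Real.div_rpow hfx.le hR.le]
          ring
      _ = a^j * f x := by rw [e2, div_self hRp.ne']; ring
  -- rpow bound
  have hbpow : h ^ β ≤ a ^ β * (f x / R) := by
    calc h ^ β ≤ (a * (f x / R)^(1/β)) ^ β := Real.rpow_le_rpow hh.le hha hβ.le
      _ = a ^ β * (f x / R) := by
          rw [Real.mul_rpow ha.le (Real.rpow_nonneg hfr _), ← Real.rpow_mul hfr,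
            one_div_mul_cancel hβ.ne', Real.rpow_one]
  have hmix : h ^ (β - ((n+1:ℕ):ℝ)) * h^(n+1) = h ^ β := by
    rw [← Real.rpow_natCast h (n+1), ← Real.rpow_add hh, sub_add_cancel]
  have hb : R * (h ^ (β - ((n+1:ℕ):ℝ)) * h^(n+1)) ≤ a^β * f x := by
    rw [hmix]
    calc R * h ^ β ≤ R * (a^β * (f x / R)) := mul_le_mul_of_nonneg_left hbpow hR.le
      _ = a^β * f x := by field_simp
  -- remainder bound
  have hrem : |iteratedDeriv (n+1) f ξ| * h^(n+1) ≤ a^(n+1) * f x + a^β * f x := by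
    have hξx : |ξ - x| ≤ h := by
      rw [abs_of_pos (by linarith [hξ.1] : 0 < ξ - x)]
      linarith [hξ.2]
    have hHd : |iteratedDeriv (n+1) f ξ| ≤ |iteratedDeriv (n+1) f x|
        + R * h ^ (β - ((n+1:ℕ):ℝ)) := by
      have h3 := hHol ξ (Ioo_subset_Icc_self hξ)
      have h4 : R * |ξ - x| ^ (β - ((n+1:ℕ):ℝ)) ≤ R * h ^ (β - ((n+1:ℕ):ℝ)) := by
        apply mul_le_mul_of_nonneg_left _ hR.le
        apply Real.rpow_le_rpow (abs_nonneg _) hξx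
        have hk := hkβ
        push_cast at hk ⊢
        linarith
      have h5 := abs_sub_abs_le_abs_sub (iteratedDeriv (n+1) f ξ) (iteratedDeriv (n+1) f x)
      linarith
    calc |iteratedDeriv (n+1) f ξ| * h^(n+1)
        ≤ (|iteratedDeriv (n+1) f x| + R * h ^ (β - ((n+1:ℕ):ℝ))) * h^(n+1) :=
          mul_le_mul_of_nonneg_right hHd (by positivity)
      _ = |iteratedDeriv (n+1) f x| * h^(n+1) + R * (h ^ (β - ((n+1:ℕ):ℝ)) * h^(n+1)) := by ring
      _ ≤ a^(n+1) * f x + a^β * f x := add_le_add (key_j (n+1) (by omega) le_rfl) hb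
  -- polynomial part bound
  have hP : |∑ j ∈ Finset.range (n+1), (j.factorial : ℝ)⁻¹ * h ^ j * iteratedDeriv j f x - f x|
      ≤ ∑ i ∈ Finset.range n, a^(i+1) / ((i+1).factorial : ℝ) * f x := by
    rw [Finset.sum_range_succ']
    simp only [Nat.factorial_zero, Nat.cast_one, inv_one, pow_zero, one_mul,
      iteratedDeriv_zero, add_sub_cancel_right]
    refine (Finset.abs_sum_le_sum_abs _ _).trans (Finset.sum_le_sum fun i hi => ?_)
    have h1 : |(((i+1).factorial : ℝ))⁻¹ * h^(i+1) * iteratedDeriv (i+1) f x|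
        = (((i+1).factorial : ℝ))⁻¹ * (|iteratedDeriv (i+1) f x| * h^(i+1)) := by
      rw [abs_mul, abs_mul, abs_inv, Nat.abs_cast, abs_pow, abs_of_pos hh]
      ring
    rw [h1]
    calc (((i+1).factorial : ℝ))⁻¹ * (|iteratedDeriv (i+1) f x| * h^(i+1))
        ≤ (((i+1).factorial : ℝ))⁻¹ * (a^(i+1) * f x) :=
          mul_le_mul_of_nonneg_left (key_j (i+1) (by omega) (by have := Finset.mem_range.mp hi; omega)) (by positivity)
      _ = a^(i+1) / ((i+1).factorial : ℝ) * f x := by ring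
  have hrem2 : |iteratedDeriv (n+1) f ξ * h^(n+1) / ((n+1).factorial : ℝ)|
      ≤ (a^(n+1) * f x + a^β * f x) / ((n+1).factorial : ℝ) := by
    rw [abs_div, abs_mul, abs_pow, abs_of_pos hh, Nat.abs_cast]
    gcongr
  have hsumexp : ∑ i ∈ Finset.range (n+1), a^(i+1)/(((i+1).factorial : ℝ)) ≤ Real.exp a - 1 := by
    have h2 := Real.sum_le_exp_of_nonneg ha.le (n+2)
    rw [Finset.sum_range_succ'] at h2
    simp only [pow_zero, Nat.factorial_zero, Nat.cast_one, div_one] at h2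
    linarith
  have hdecomp : f (x+h) - f x =
      (∑ j ∈ Finset.range (n+1), (j.factorial : ℝ)⁻¹ * h ^ j * iteratedDeriv j f x - f x)
      + iteratedDeriv (n+1) f ξ * h^(n+1) / ((n+1).factorial : ℝ) := by
    have := hTay
    push_cast at this ⊢
    linarith
  calc |f (x+h) - f x| ≤ |∑ j ∈ Finset.range (n+1), (j.factorial : ℝ)⁻¹ * h ^ j * iteratedDeriv j f x - f x|
        + |iteratedDeriv (n+1) f ξ * h^(n+1) / ((n+1).factorial : ℝ)| := by
        rw [hdecomp]; exact abs_add_le _ _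
    _ ≤ (∑ i ∈ Finset.range n, a^(i+1) / ((i+1).factorial : ℝ) * f x)
        + (a^(n+1) * f x + a^β * f x) / ((n+1).factorial : ℝ) := add_le_add hP hrem2
    _ = (∑ i ∈ Finset.range (n+1), a^(i+1) / ((i+1).factorial : ℝ)) * f x
        + a^β / ((n+1).factorial : ℝ) * f x := by
        rw [Finset.sum_range_succ, add_mul, Finset.sum_mul]
        ring
    _ ≤ (Real.exp a - 1) * f x + a^β / ((n+1).factorial : ℝ) * f x := by
        have := mul_le_mul_of_nonneg_right hsumexp hfx.le
        linarith
    _ = ((Real.exp a - 1) + a ^ β / (Nat.factorial (n+1))) * f x := by ring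

theorem stmt_3 (β : ℝ) (hβ : 0 < β) (k0 : ℕ) (hk0 : (k0 : ℝ) < β) (hk0' : β ≤ k0 + 1)
    (f : ℝ → ℝ) (R : ℝ) (hR : 0 < R)
    (hf : ContDiff ℝ k0 f)
    (hpos : ∀ x ∈ Icc (0:ℝ) 1, 0 ≤ f x)
    (hderiv : ∀ j : ℕ, 1 ≤ j → j ≤ k0 → ∀ x ∈ Icc (0:ℝ) 1,
      |iteratedDeriv j f x| ≤ R ^ ((j : ℝ) / β) * f x ^ ((β - j) / β))
    (hHolder : ∀ x ∈ Icc (0:ℝ) 1, ∀ y ∈ Icc (0:ℝ) 1,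
      |iteratedDeriv k0 f x - iteratedDeriv k0 f y| ≤ R * |x - y| ^ (β - k0))
    (a : ℝ) (ha : 0 < a)
    (haβ : (Real.exp a - 1) + a ^ β / (Nat.factorial k0) ≤ 1 / 2) :
    ∀ x ∈ Icc (0:ℝ) 1, ∀ h : ℝ, x + h ∈ Icc (0:ℝ) 1 →
      |h| ≤ a * (f x / R) ^ (1 / β) →
      |f (x + h) - f x| ≤ f x / 2 ∧
      f x / 2 ≤ f (x + h) ∧ f (x + h) ≤ 3 * f x / 2 := by
  have hexp : 0 ≤ Real.exp a - 1 := by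
    have := Real.add_one_le_exp a
    linarith
  intro x hx h hxh hbound
  have hfx0 : 0 ≤ f x := hpos x hx
  -- reduce to key estimate
  suffices key : |f (x + h) - f x| ≤ f x / 2 by
    obtain ⟨k1, k2⟩ := abs_le.mp key
    exact ⟨key, by linarith, by linarith⟩
  -- trivial case h = 0
  rcases eq_or_ne h 0 with rfl | hh0
  · simp only [add_zero, sub_self, abs_zero]
    linarith
  -- f x must be positive
  have hfxpos : 0 < f x := by
    rcases lt_or_eq_of_le hfx0 with hp | hp
    · exact hp
    · exfalso
      rw [← hp, zero_div, Real.zero_rpow (by positivity : 1/β ≠ 0), mul_zero] at hbound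
      exact hh0 (abs_eq_zero.mp (le_antisymm hbound (abs_nonneg h)))
  have key2 : |f (x + h) - f x| ≤ ((Real.exp a - 1) + a ^ β / (Nat.factorial k0)) * f x := by
    rcases Nat.eq_zero_or_eq_succ_pred k0 with hk | hk
    · -- Hölder case: k0 = 0
      subst hk
      have h1 := hHolder (x + h) hxh x hx
      simp only [iteratedDeriv_zero, Nat.cast_zero, sub_zero, add_sub_cancel_left] at h1
      have h2 : |h| ^ β ≤ a ^ β * (f x / R) := by
        calc |h| ^ β ≤ (a * (f x / R) ^ (1/β)) ^ β :=
              Real.rpow_le_rpow (abs_nonneg h) hbound hβ.le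
          _ = a ^ β * (f x / R) := by
            rw [Real.mul_rpow ha.le (Real.rpow_nonneg (by positivity) _),
              ← Real.rpow_mul (by positivity), one_div_mul_cancel hβ.ne', Real.rpow_one]
      calc |f (x + h) - f x| ≤ R * |h| ^ β := h1
        _ ≤ R * (a ^ β * (f x / R)) := mul_le_mul_of_nonneg_left h2 hR.le
        _ = a ^ β * f x := by field_simp
        _ ≤ ((Real.exp a - 1) + a ^ β / (Nat.factorial 0)) * f x := by
          simp only [Nat.factorial_zero, Nat.cast_one, div_one]
          nlinarith
    · -- Taylor case: k0 = n + 1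
      obtain ⟨n, rfl⟩ : ∃ n, k0 = n + 1 := ⟨k0 - 1, hk⟩
      have hsub : ∀ y : ℝ, min x (x+h) ≤ y → y ≤ max x (x+h) → y ∈ Icc (0:ℝ) 1 := by
        intro y h1 h2
        exact ⟨le_trans (le_min hx.1 hxh.1) h1, le_trans h2 (max_le hx.2 hxh.2)⟩
      rcases lt_or_gt_of_ne hh0 with hneg | hpos'
      · -- h < 0 : reflect
        set g : ℝ → ℝ := fun y => f (2*x - y) with hg
        have hgf : ∀ m : ℕ, ∀ y : ℝ, iteratedDeriv m g y = (-1:ℝ)^m * iteratedDeriv m f (2*x - y) := by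
          intro m y
          have hco : g = fun y => (fun z => f (2*x + z)) (-y) := by
            funext t
            show f (2*x - t) = f (2*x + -t)
            rw [sub_eq_add_neg]
          calc iteratedDeriv m g y
              = (-1:ℝ)^m • iteratedDeriv m (fun z => f (2*x + z)) (-y) := by
                rw [hco]; exact iteratedDeriv_comp_neg m (fun z => f (2*x + z)) y
            _ = (-1:ℝ)^m * iteratedDeriv m f (2*x - y) := by
                simp only [iteratedDeriv_comp_const_add, smul_eq_mul, ← sub_eq_add_neg]
        have hgc : ContDiff ℝ (n+1 : ℕ) g :=
          hf.comp ((contDiff_const (c := 2*x)).sub contDiff_id)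
        have hgx : g x = f x := by
          simp only [hg]
          congr 1
          ring
        have hmem : ∀ y ∈ Icc x (x + (-h)), (2*x - y) ∈ Icc (0:ℝ) 1 := by
          intro y hy
          apply hsub
          · exact le_trans (min_le_right _ _) (by linarith [hy.2])
          · exact le_trans (by linarith [hy.1] : 2*x - y ≤ x) (le_max_left _ _)
        have hcore := core_est β hβ n g R hR hgc x (-h) (by linarith) (by rwa [hgx])
          (by exact_mod_cast hk0)
          (fun j h1 h2 => by
            rw [hgf, abs_mul, abs_pow, abs_neg, abs_one, one_pow, one_mul, hgx]
            have : (2*x - x) = x := by ring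
            rw [this]
            exact hderiv j h1 h2 x hx)
          (fun y hy => by
            rw [hgf, hgf, show (2*x - x) = x by ring, ← mul_sub, abs_mul, abs_pow, abs_neg,
              abs_one, one_pow, one_mul]
            have : |y - x| = |(2*x - y) - x| := by rw [abs_sub_comm]; congr 1; ring
            rw [this]
            exact hHolder (2*x - y) (hmem y hy) x hx)
          a ha (by rw [hgx, ← abs_of_neg hneg]; exact hbound)
        rw [hgx] at hcore
        have : g (x + -h) = f (x + h) := by
          simp only [hg]
          congr 1
          ring
        rwa [this] at hcore
      · -- h > 0
        exact core_est β hβ n f R hR hf x h hpos' hfxpos (by exact_mod_cast hk0)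
          (fun j h1 h2 => hderiv j h1 h2 x hx)
          (fun y hy => by
            have hy01 : y ∈ Icc (0:ℝ) 1 := by
              apply hsub
              · exact le_trans (min_le_left _ _) hy.1
              · exact le_trans hy.2 (le_max_right _ _)
            exact hHolder y hy01 x hx)
          a ha (by rw [← abs_of_pos hpos']; exact hbound)
  calc |f (x + h) - f x| ≤ ((Real.exp a - 1) + a ^ β / (Nat.factorial k0)) * f x := key2
    _ ≤ (1/2) * f x := mul_le_mul_of_nonneg_right haβ hfx0
    _ = f x / 2 := by ring
end

section
/- Let f ∈ H^β_B with norm R, meaning f : [0,1] → [0,1] is in C^β with |f^{(j)}(x)| ≤ R^{j/β} · min(f(x), 1-f(x))^{(β-j)/β} for 1 ≤ j ≤ ⌊β⌋, and |f^{(⌊β⌋)}(x) - f^{(⌊β⌋)}(y)| ≤ R|x-y|^{β-⌊β⌋}. Let a > 0 satisfy (e^a - 1) + a^β/⌊β⌋! ≤ 1/2. Then for |h| ≤ a·(min(f(x),1-f(x))/R)^{1/β} with x+h ∈ [0,1], one has |f(x+h) - f(x)| ≤ (1/2)·min(f(x), 1-f(x)), and consequently (1/4)·f(x)(1-f(x))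 ≤ f(x+h)(1-f(x+h)) ≤ (9/4)·f(x)(1-f(x)). -/
open Real Set

private lemma aux_iterWithin {f : ℝ → ℝ} {n : ℕ} (hf : ContDiff ℝ (n : ℕ∞) f) {s : Set ℝ}
    (hs : UniqueDiffOn ℝ s) {x : ℝ} (hx : x ∈ s) {j : ℕ} (hj : j ≤ n) :
    iteratedDerivWithin j f s x = iteratedDeriv j f x := by
  have h1 := ((contDiff_iff_ftaylorSeries.mp hf).hasFTaylorSeriesUpToOn
    s).eq_iteratedFDerivWithin_of_uniqueDiffOn (m := j) (by exact_mod_cast hj) hs hx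
  rw [iteratedDerivWithin_eq_iteratedFDerivWithin, iteratedDeriv_eq_iteratedFDeriv, ← h1]
  rfl

private lemma aux_comp_const_sub (n : ℕ) (f : ℝ → ℝ) (s : ℝ) (a : ℝ) :
    iteratedDeriv n (fun t => f (s - t)) a = (-1 : ℝ) ^ n * iteratedDeriv n f (s - a) := by
  have h : (fun t : ℝ => f (s - t)) = fun t : ℝ => (fun z => f (s + z)) (-t) := by
    funext t; simp [sub_eq_add_neg]
  rw [h, iteratedDeriv_comp_neg n (fun z => f (s + z)) a, iteratedDeriv_comp_const_add]
  simp [sub_eq_add_neg, smul_eq_mul]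

/-- Taylor estimate with uniform bound on the top derivative, both directions. -/
private lemma aux_taylor {k0 : ℕ} (hk : 1 ≤ k0) {f : ℝ → ℝ} (hf : ContDiff ℝ (k0 : ℕ∞) f)
    {x y C : ℝ} (hxy : x ≠ y) (hC : ∀ t ∈ uIcc x y, |iteratedDeriv k0 f t| ≤ C) :
    |f y - ∑ j ∈ Finset.range k0, ((j.factorial : ℝ))⁻¹ * (y - x) ^ j * iteratedDeriv j f x|
      ≤ C * |y - x| ^ k0 / (k0.factorial : ℝ) := by
  obtain ⟨n, rfl⟩ : ∃ n, k0 = n + 1 := ⟨k0 - 1, by omega⟩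
  have hfn : ContDiffOn ℝ (n : ℕ∞) f univ := (hf.of_le (by exact_mod_cast Nat.le_succ n)).contDiffOn
  rcases lt_or_gt_of_ne hxy with hlt | hgt
  · -- x < y : direct Lagrange
    have hud : UniqueDiffOn ℝ (Icc x y) := uniqueDiffOn_Icc hlt
    have hdiff : DifferentiableOn ℝ (iteratedDerivWithin n f (Icc x y)) (Ioo x y) := by
      intro t ht
      have h2 : iteratedDerivWithin n f (Icc x y) =ᶠ[nhds t] iteratedDeriv n f := by
        filter_upwards [Ioo_mem_nhds ht.1 ht.2] with z hz
        exact aux_iterWithin hf hud (Ioo_subset_Icc_self hz) (Nat.le_succ n)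
      have h3 : DifferentiableAt ℝ (iteratedDeriv n f) t :=
        (hf.differentiable_iteratedDeriv n
          (by exact_mod_cast Nat.lt_succ_self n)).differentiableAt
      exact (h3.congr_of_eventuallyEq h2).differentiableWithinAt
    obtain ⟨ξ, hξ, heq⟩ := taylor_mean_remainder_lagrange (f := f) (n := n) (x₀ := x) (x := y) hlt.ne
      (hf.contDiffOn.of_le (by exact_mod_cast Nat.le_succ n))
      (by rw [uIcc_of_le hlt.le, uIoo_of_le hlt.le]; exact hdiff)
    rw [uIoo_of_le hlt.le] at hξ
    rw [uIcc_of_le hlt.le] at heq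
    rw [taylor_within_apply] at heq
    have hsum : ∀ j ∈ Finset.range (n + 1),
        ((j.factorial : ℝ)⁻¹ * (y - x) ^ j) • iteratedDerivWithin j f (Icc x y) x
          = (j.factorial : ℝ)⁻¹ * (y - x) ^ j * iteratedDeriv j f x := by
      intro j hj
      rw [aux_iterWithin hf hud (left_mem_Icc.mpr hlt.le) (Finset.mem_range.mp hj).le]
      simp [smul_eq_mul]
    rw [Finset.sum_congr rfl hsum] at heq
    rw [heq, aux_iterWithin hf hud (Ioo_subset_Icc_self hξ) le_rfl]
    have h1 : |iteratedDeriv (n + 1) f ξ| ≤ C :=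
      hC ξ (by rw [uIcc_of_le hlt.le]; exact Ioo_subset_Icc_self hξ)
    calc |iteratedDeriv (n + 1) f ξ * (y - x) ^ (n + 1) / ((n + 1).factorial : ℝ)|
        = |iteratedDeriv (n + 1) f ξ| * |y - x| ^ (n + 1) / ((n + 1).factorial : ℝ) := by
          rw [abs_div, abs_mul, abs_pow, Nat.abs_cast]
      _ ≤ C * |y - x| ^ (n + 1) / ((n + 1).factorial : ℝ) := by gcongr
  · -- y < x : reflect
    set g : ℝ → ℝ := fun t => f (x + y - t) with hg
    have hgc : ContDiff ℝ ((n + 1 : ℕ) : ℕ∞) g :=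
      hf.comp (contDiff_const.sub contDiff_id)
    have hud : UniqueDiffOn ℝ (Icc y x) := uniqueDiffOn_Icc hgt
    have hgd : ∀ (j : ℕ) (t : ℝ), iteratedDeriv j g t
        = (-1 : ℝ) ^ j * iteratedDeriv j f (x + y - t) := fun j t =>
      aux_comp_const_sub j f (x + y) t
    have hdiff : DifferentiableOn ℝ (iteratedDerivWithin n g (Icc y x)) (Ioo y x) := by
      intro t ht
      have h2 : iteratedDerivWithin n g (Icc y x) =ᶠ[nhds t] iteratedDeriv n g := by
        filter_upwards [Ioo_mem_nhds ht.1 ht.2] with z hz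
        exact aux_iterWithin hgc hud (Ioo_subset_Icc_self hz) (Nat.le_succ n)
      have h3 : DifferentiableAt ℝ (iteratedDeriv n g) t :=
        (hgc.differentiable_iteratedDeriv n
          (by exact_mod_cast Nat.lt_succ_self n)).differentiableAt
      exact (h3.congr_of_eventuallyEq h2).differentiableWithinAt
    obtain ⟨ξ, hξ, heq⟩ := taylor_mean_remainder_lagrange (f := g) (n := n) (x₀ := y) (x := x) hgt.ne
      (hgc.contDiffOn.of_le (by exact_mod_cast Nat.le_succ n))
      (by rw [uIcc_of_le hgt.le, uIoo_of_le hgt.le]; exact hdiff)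
    rw [uIoo_of_le hgt.le] at hξ
    rw [uIcc_of_le hgt.le] at heq
    rw [taylor_within_apply] at heq
    have hsum : ∀ j ∈ Finset.range (n + 1),
        ((j.factorial : ℝ)⁻¹ * (x - y) ^ j) • iteratedDerivWithin j g (Icc y x) y
          = (j.factorial : ℝ)⁻¹ * (y - x) ^ j * iteratedDeriv j f x := by
      intro j hj
      rw [aux_iterWithin hgc hud (left_mem_Icc.mpr hgt.le) (Finset.mem_range.mp hj).le, hgd]
      have : x + y - y = x := by ring
      rw [this]
      rw [smul_eq_mul]
      have : (x - y) ^ j * ((-1 : ℝ) ^ j * iteratedDeriv j f x)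
          = (y - x) ^ j * iteratedDeriv j f x := by
        rw [← mul_assoc, ← mul_pow]
        ring_nf
      rw [mul_assoc, this, mul_assoc]
    rw [Finset.sum_congr rfl hsum] at heq
    have hgx : g x = f y := by simp [hg]
    rw [hgx] at heq
    rw [heq, aux_iterWithin hgc hud (Ioo_subset_Icc_self hξ) le_rfl, hgd]
    have hmem : x + y - ξ ∈ uIcc x y := by
      rw [uIcc_of_ge hgt.le]
      constructor <;> [linarith [hξ.2]; linarith [hξ.1]]
    have h1 : |iteratedDeriv (n + 1) f (x + y - ξ)| ≤ C := hC _ hmem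
    calc |(-1 : ℝ) ^ (n + 1) * iteratedDeriv (n + 1) f (x + y - ξ) * (x - y) ^ (n + 1)
          / ((n + 1).factorial : ℝ)|
        = |iteratedDeriv (n + 1) f (x + y - ξ)| * |y - x| ^ (n + 1)
          / ((n + 1).factorial : ℝ) := by
          rw [abs_div, abs_mul, abs_mul, abs_pow, abs_pow, abs_neg, abs_one, one_pow, one_mul,
            Nat.abs_cast, abs_sub_comm]
      _ ≤ C * |y - x| ^ (n + 1) / ((n + 1).factorial : ℝ) := by gcongr

theorem stmt_4 (β : ℝ) (hβ : 0 < β) (k0 : ℕ) (hk0 : (k0 : ℝ) < β) (hk0' : β ≤ k0 + 1)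
    (f : ℝ → ℝ) (R : ℝ) (hR : 0 < R)
    (hf : ContDiff ℝ k0 f)
    (hrange : ∀ x ∈ Icc (0:ℝ) 1, f x ∈ Icc (0:ℝ) 1)
    (hderiv : ∀ j : ℕ, 1 ≤ j → j ≤ k0 → ∀ x ∈ Icc (0:ℝ) 1,
      |iteratedDeriv j f x| ≤ R ^ ((j : ℝ) / β) * (min (f x) (1 - f x)) ^ ((β - j) / β))
    (hHolder : ∀ x ∈ Icc (0:ℝ) 1, ∀ y ∈ Icc (0:ℝ) 1,
      |iteratedDeriv k0 f x - iteratedDeriv k0 f y| ≤ R * |x - y| ^ (β - k0))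
    (a : ℝ) (ha : 0 < a)
    (haβ : (Real.exp a - 1) + a ^ β / (Nat.factorial k0) ≤ 1 / 2) :
    ∀ x ∈ Icc (0:ℝ) 1, ∀ h : ℝ, x + h ∈ Icc (0:ℝ) 1 →
      |h| ≤ a * (min (f x) (1 - f x) / R) ^ (1 / β) →
      |f (x + h) - f x| ≤ min (f x) (1 - f x) / 2 ∧
      (1 / 4) * (f x * (1 - f x)) ≤ f (x + h) * (1 - f (x + h)) ∧
      f (x + h) * (1 - f (x + h)) ≤ (9 / 4) * (f x * (1 - f x)) := by
  intro x hx h hxh hha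
  set m : ℝ := min (f x) (1 - f x) with hm
  have hfx := hrange x hx
  have hfxh := hrange _ hxh
  have hm0 : 0 ≤ m := le_min hfx.1 (by linarith [hfx.2])
  have hmf : m ≤ f x := min_le_left _ _
  have hmf' : m ≤ 1 - f x := min_le_right _ _
  -- Main estimate
  have key : |f (x + h) - f x| ≤ m / 2 := by
    rcases eq_or_lt_of_le hm0 with hm0' | hmpos
    · -- m = 0 forces h = 0
      have : |h| ≤ 0 := by
        rw [← hm0', zero_div, Real.zero_rpow (by positivity), mul_zero] at hha
        exact hha
      have h0 : h = 0 := abs_eq_zero.mp (le_antisymm this (abs_nonneg h))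
      simp [h0, ← hm0']
    · -- m > 0
      rcases eq_or_ne h 0 with rfl | hh0
      · simpa using by positivity
      have ht0 : (0:ℝ) < |h| := abs_pos.mpr hh0
      set t : ℝ := |h| with htdef
      -- basic rpow facts
      have hmr : (0:ℝ) < m / R := div_pos hmpos hR
      have htb : t ^ β ≤ a ^ β * (m / R) := by
        calc t ^ β ≤ (a * (m / R) ^ (1 / β)) ^ β :=
              Real.rpow_le_rpow ht0.le hha hβ.le
          _ = a ^ β * ((m / R) ^ (1 / β)) ^ β := Real.mul_rpow ha.le (by positivity)
          _ = a ^ β * (m / R) := by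
              rw [← Real.rpow_mul hmr.le, one_div_mul_cancel hβ.ne', Real.rpow_one]
      have hterm : ∀ j : ℕ, 1 ≤ j → j ≤ k0 →
          |iteratedDeriv j f x| * t ^ j ≤ a ^ j * m := by
        intro j hj1 hj2
        have htj : t ^ j ≤ a ^ j * (m / R) ^ ((j : ℝ) / β) := by
          calc t ^ j ≤ (a * (m / R) ^ (1 / β)) ^ j :=
                pow_le_pow_left₀ ht0.le hha j
            _ = a ^ j * ((m / R) ^ (1 / β)) ^ j := mul_pow _ _ _
            _ = a ^ j * (m / R) ^ ((j : ℝ) / β) := by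
                rw [← Real.rpow_natCast ((m / R) ^ (1/β)) j, ← Real.rpow_mul hmr.le]
                rw [one_div, inv_mul_eq_div]
        calc |iteratedDeriv j f x| * t ^ j
            ≤ (R ^ ((j : ℝ) / β) * m ^ ((β - j) / β)) * (a ^ j * (m / R) ^ ((j : ℝ) / β)) := by
              apply mul_le_mul (hderiv j hj1 hj2 x hx) htj (by positivity) (by positivity)
          _ = a ^ j * m := by
              rw [Real.div_rpow hm0 hR.le]
              rw [show R ^ ((j:ℝ)/β) * m ^ ((β - j)/β) * (a ^ j * (m ^ ((j:ℝ)/β) / R ^ ((j:ℝ)/β)))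
                = a ^ j * (m ^ ((β - j)/β) * m ^ ((j:ℝ)/β)) * (R ^ ((j:ℝ)/β) / R ^ ((j:ℝ)/β))
                from by ring]
              rw [div_self (by positivity), mul_one, ← Real.rpow_add hmpos]
              rw [show (β - j)/β + (j:ℝ)/β = 1 from by field_simp; ring]
              rw [Real.rpow_one]
      -- the interval is inside [0,1]
      have hsub : uIcc x (x + h) ⊆ Icc (0:ℝ) 1 := uIcc_subset_Icc hx hxh
      have hRtβ : R * t ^ β ≤ a ^ β * m := by
        calc R * t ^ β ≤ R * (a ^ β * (m / R)) := by
              exact mul_le_mul_of_nonneg_left htb hR.le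
          _ = a ^ β * m := by field_simp
      have hexp1 : 1 + a ≤ Real.exp a := by
        have := Real.add_one_le_exp a; linarith
      rcases Nat.eq_zero_or_pos k0 with hk00 | hk01
      · -- k0 = 0 : pure Hölder
        subst hk00
        have h1 := hHolder (x + h) hxh x hx
        simp only [iteratedDeriv_zero, Nat.cast_zero, sub_zero, add_sub_cancel_left] at h1
        have haβ2 : a ^ β ≤ 1 / 2 := by
          have : (Nat.factorial 0 : ℝ) = 1 := by norm_num
          rw [this, div_one] at haβ
          linarith
        calc |f (x + h) - f x| ≤ R * t ^ β := h1
          _ ≤ a ^ β * m := hRtβ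
          _ ≤ (1 / 2) * m := mul_le_mul_of_nonneg_right haβ2 hm0
          _ = m / 2 := by ring
      · -- k0 ≥ 1 : Taylor
        set C : ℝ := |iteratedDeriv k0 f x| + R * t ^ (β - k0) with hC
        have hCb : ∀ t' ∈ uIcc x (x + h), |iteratedDeriv k0 f t'| ≤ C := by
          intro t' ht'
          have h1 := hHolder t' (hsub ht') x hx
          have h2 : |t' - x| ^ (β - (k0:ℝ)) ≤ t ^ (β - (k0:ℝ)) := by
            apply Real.rpow_le_rpow (abs_nonneg _) ?_ (by linarith)
            calc |t' - x| ≤ |x + h - x| := abs_sub_left_of_mem_uIcc ht'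
              _ = t := by rw [add_sub_cancel_left]
          calc |iteratedDeriv k0 f t'|
              ≤ |iteratedDeriv k0 f x| + |iteratedDeriv k0 f t' - iteratedDeriv k0 f x| := by
                have := abs_add_le (iteratedDeriv k0 f x)
                  (iteratedDeriv k0 f t' - iteratedDeriv k0 f x)
                simpa using this
            _ ≤ |iteratedDeriv k0 f x| + R * t ^ (β - (k0:ℝ)) := by
                have h3 : R * |t' - x| ^ (β - (k0:ℝ)) ≤ R * t ^ (β - (k0:ℝ)) :=
                  mul_le_mul_of_nonneg_left h2 hR.le
                linarith
        have hx0 : x ≠ x + h := by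
          intro hcontra; apply hh0; linarith [hcontra]
        have htay := aux_taylor hk01 hf hx0 hCb
        rw [add_sub_cancel_left] at htay
        set S : ℝ := ∑ j ∈ Finset.range k0, ((j.factorial : ℝ))⁻¹ * h ^ j * iteratedDeriv j f x
          with hSdef
        have hS : S = f x + ∑ j ∈ Finset.Ico 1 k0,
            ((j.factorial : ℝ))⁻¹ * h ^ j * iteratedDeriv j f x := by
          rw [hSdef, Finset.range_eq_Ico, Finset.sum_eq_sum_Ico_succ_bot hk01]
          simp
        have h4 : |S - f x| ≤ (∑ j ∈ Finset.Ico 1 k0, ((j.factorial : ℝ))⁻¹ * a ^ j) * m := by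
          rw [hS, add_sub_cancel_left, Finset.sum_mul]
          refine (Finset.abs_sum_le_sum_abs _ _).trans (Finset.sum_le_sum ?_)
          intro j hj
          obtain ⟨hj1, hj2⟩ := Finset.mem_Ico.mp hj
          rw [abs_mul, abs_mul, abs_inv, abs_pow, Nat.abs_cast, mul_assoc, mul_assoc]
          apply mul_le_mul_of_nonneg_left _ (by positivity)
          rw [mul_comm]
          exact hterm j hj1 hj2.le
        have h5 : C * t ^ k0 / (k0.factorial : ℝ) ≤
            ((k0.factorial : ℝ))⁻¹ * a ^ k0 * m + a ^ β / (k0.factorial : ℝ) * m := by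
          have hterm_k0 := hterm k0 hk01 le_rfl
          have hRt : R * t ^ (β - (k0:ℝ)) * t ^ k0 ≤ a ^ β * m := by
            have heq : t ^ (β - (k0:ℝ)) * (t:ℝ) ^ (k0:ℕ) = t ^ β := by
              rw [← Real.rpow_natCast t k0, ← Real.rpow_add ht0]
              ring_nf
            calc R * t ^ (β - (k0:ℝ)) * t ^ k0 = R * t ^ β := by rw [mul_assoc, heq]
              _ ≤ a ^ β * m := hRtβ
          have hfact : (0:ℝ) < (k0.factorial : ℝ) := by positivity
          rw [hC, add_mul, add_div]
          apply add_le_add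
          · rw [div_le_iff₀ hfact] at *
            calc |iteratedDeriv k0 f x| * t ^ k0 ≤ a ^ k0 * m := hterm_k0
              _ = (k0.factorial : ℝ)⁻¹ * a ^ k0 * m * (k0.factorial : ℝ) := by
                  field_simp
          · rw [div_mul_eq_mul_div]
            gcongr
        have hE : (∑ j ∈ Finset.Ico 1 k0, ((j.factorial : ℝ))⁻¹ * a ^ j)
            + ((k0.factorial : ℝ))⁻¹ * a ^ k0 ≤ Real.exp a - 1 := by
          have h6 := Real.sum_le_exp_of_nonneg ha.le (k0 + 1)
          have h7 : ∑ i ∈ Finset.range (k0 + 1), a ^ i / (i.factorial : ℝ)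
              = 1 + ∑ j ∈ Finset.Ico 1 (k0 + 1), a ^ j / (j.factorial : ℝ) := by
            rw [Finset.range_eq_Ico, Finset.sum_eq_sum_Ico_succ_bot (by omega)]
            simp
          have h8 : ∑ j ∈ Finset.Ico 1 (k0 + 1), a ^ j / (j.factorial : ℝ)
              = (∑ j ∈ Finset.Ico 1 k0, ((j.factorial : ℝ))⁻¹ * a ^ j)
                + ((k0.factorial : ℝ))⁻¹ * a ^ k0 := by
            rw [Finset.sum_Ico_succ_top hk01]
            congr 1
            · exact Finset.sum_congr rfl (fun j _ => by ring)
            · ring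
          rw [h7, h8] at h6
          linarith
        calc |f (x + h) - f x| ≤ |f (x + h) - S| + |S - f x| := by
              have heq2 : f (x + h) - f x = (f (x + h) - S) + (S - f x) := by ring
              rw [heq2]; exact abs_add_le _ _
          _ ≤ C * t ^ k0 / (k0.factorial : ℝ)
              + (∑ j ∈ Finset.Ico 1 k0, ((j.factorial : ℝ))⁻¹ * a ^ j) * m :=
              add_le_add htay h4
          _ ≤ (((k0.factorial : ℝ))⁻¹ * a ^ k0 * m + a ^ β / (k0.factorial : ℝ) * m)
              + (∑ j ∈ Finset.Ico 1 k0, ((j.factorial : ℝ))⁻¹ * a ^ j) * m :=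
              add_le_add_left h5 _
          _ = ((∑ j ∈ Finset.Ico 1 k0, ((j.factorial : ℝ))⁻¹ * a ^ j)
              + ((k0.factorial : ℝ))⁻¹ * a ^ k0) * m + a ^ β / (k0.factorial : ℝ) * m := by
              ring
          _ ≤ (Real.exp a - 1) * m + a ^ β / (k0.factorial : ℝ) * m :=
              add_le_add_left (mul_le_mul_of_nonneg_right hE hm0) _
          _ = ((Real.exp a - 1) + a ^ β / (k0.factorial : ℝ)) * m := by ring
          _ ≤ (1 / 2) * m := mul_le_mul_of_nonneg_right haβ hm0
          _ = m / 2 := by ring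
  refine ⟨key, ?_, ?_⟩
  · nlinarith [abs_le.mp key, hfxh.1, hfxh.2]
  · nlinarith [abs_le.mp key, hfxh.1, hfxh.2]
end

section
/- For all r, x > 0 with r ≤ x, the Kullback-Leibler–type quantity D(x, r) := (n/2) ∫_0^1 (2√(t+r) - 2√t)^2 dt evaluated with the linear functions f_0(t) = t and f_1(t) = t + r satisfies (n/2) ∫_0^1 (2√(t+r) - 2√t)^2 dt ≤ 10 n r^2 log(1/r) for all 0 < r < 1/e. -/
open Real intervalIntegral

theorem stmt_5 (n : ℝ) (hn : 0 < n) (r : ℝ) (hr0 : 0 < r) (hr1 : r < 1 / Real.exp 1) :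
    (n / 2) * ∫ t in (0:ℝ)..1, (2 * Real.sqrt (t + r) - 2 * Real.sqrt t) ^ 2
      ≤ 10 * n * r ^ 2 * Real.log (1 / r) := by
  have he : (1:ℝ) < Real.exp 1 := by
    have := Real.add_one_le_exp (1:ℝ); linarith
  have hr1' : r < 1 := hr1.trans (by rw [div_lt_one (Real.exp_pos 1)]; exact he)
  have hL : 1 < Real.log (1 / r) := by
    have h1 : Real.exp 1 < 1 / r := by
      rw [lt_div_iff₀ hr0]
      calc Real.exp 1 * r < Real.exp 1 * (1 / Real.exp 1) := by
            exact mul_lt_mul_of_pos_left hr1 (Real.exp_pos 1)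
        _ = 1 := by field_simp
    calc (1:ℝ) = Real.log (Real.exp 1) := (Real.log_exp 1).symm
      _ < Real.log (1 / r) := Real.log_lt_log (Real.exp_pos 1) h1
  have hf : Continuous fun t : ℝ => (2 * Real.sqrt (t + r) - 2 * Real.sqrt t) ^ 2 := by
    fun_prop
  have hsplit : (∫ t in (0:ℝ)..1, (2 * Real.sqrt (t + r) - 2 * Real.sqrt t) ^ 2)
      = (∫ t in (0:ℝ)..r, (2 * Real.sqrt (t + r) - 2 * Real.sqrt t) ^ 2)
        + ∫ t in r..1, (2 * Real.sqrt (t + r) - 2 * Real.sqrt t) ^ 2 :=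
    (intervalIntegral.integral_add_adjacent_intervals (hf.intervalIntegrable _ _)
      (hf.intervalIntegrable _ _)).symm
  have h1 : (∫ t in (0:ℝ)..r, (2 * Real.sqrt (t + r) - 2 * Real.sqrt t) ^ 2)
      ≤ 12 * r ^ 2 := by
    have : (∫ t in (0:ℝ)..r, (2 * Real.sqrt (t + r) - 2 * Real.sqrt t) ^ 2)
        ≤ ∫ _t in (0:ℝ)..r, (12 * r : ℝ) := by
      apply intervalIntegral.integral_mono_on hr0.le (hf.intervalIntegrable _ _)
        intervalIntegrable_const
      intro t ht
      have ha2 : (Real.sqrt (t + r)) ^ 2 = t + r := Real.sq_sqrt (by linarith [ht.1])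
      have hb2 : (Real.sqrt t) ^ 2 = t := Real.sq_sqrt ht.1
      nlinarith [mul_nonneg (Real.sqrt_nonneg (t + r)) (Real.sqrt_nonneg t), ht.2]
    simpa using this.trans_eq (by simp; ring)
  have h2 : (∫ t in r..1, (2 * Real.sqrt (t + r) - 2 * Real.sqrt t) ^ 2)
      ≤ r ^ 2 * Real.log (1 / r) := by
    have hint : IntervalIntegrable (fun t => r ^ 2 / t) MeasureTheory.volume r 1 := by
      apply ContinuousOn.intervalIntegrable
      apply ContinuousOn.div continuousOn_const continuousOn_id
      intro t ht
      rw [Set.uIcc_of_le hr1'.le] at ht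
      exact ne_of_gt (lt_of_lt_of_le hr0 ht.1)
    have hmono : (∫ t in r..1, (2 * Real.sqrt (t + r) - 2 * Real.sqrt t) ^ 2)
        ≤ ∫ t in r..1, r ^ 2 / t := by
      apply intervalIntegral.integral_mono_on hr1'.le (hf.intervalIntegrable _ _) hint
      intro t ht
      have ht0 : 0 < t := lt_of_lt_of_le hr0 ht.1
      have ha2 : (Real.sqrt (t + r)) ^ 2 = t + r := Real.sq_sqrt (by linarith)
      have hb2 : (Real.sqrt t) ^ 2 = t := Real.sq_sqrt ht0.le
      have hb0 : 0 < Real.sqrt t := Real.sqrt_pos.mpr ht0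
      have hab : Real.sqrt t ≤ Real.sqrt (t + r) := Real.sqrt_le_sqrt (by linarith)
      rw [le_div_iff₀ ht0]
      nlinarith [mul_nonneg (sub_nonneg.mpr hab) hb0.le]
    have heval : (∫ t in r..1, r ^ 2 / t) = r ^ 2 * Real.log (1 / r) := by
      have h0 : (0:ℝ) ∉ Set.uIcc r 1 := by
        rw [Set.uIcc_of_le hr1'.le]
        intro h; exact absurd h.1 (not_le.mpr hr0)
      have : (∫ t in r..1, r ^ 2 / t) = r ^ 2 * ∫ t in r..1, 1 / t := by
        rw [← intervalIntegral.integral_const_mul]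
        congr 1; ext t; ring
      rw [this, integral_one_div h0, Real.log_div one_ne_zero (ne_of_gt hr0)]
    exact hmono.trans_eq heval
  rw [hsplit]
  nlinarith [mul_pos hn (pow_pos hr0 2), mul_pos (mul_pos hn (pow_pos hr0 2)) (lt_trans one_pos hL)]
end

section
/- Let f be ⌊β⌋-times differentiable on [0,1] with f^{(⌊β⌋)} Hölder continuous of exponent β - ⌊β⌋ and constant R (β > 0 non-integer or the statement read with ⌊β⌋ = β - 1 for integer β). Let ψ be a bounded compactly supported function with ∫ x^m ψ(x) dx = 0 for 0 ≤ m ≤ ⌊β⌋. Then for ψ_{j,k}(x) = 2^{j/2} ψ(2^j x - k), |∫ f(x) ψ_{j,k}(x) dx| ≤ C(ψ, β) · R · 2^{-j(β + 1/2)}. -/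
open Real MeasureTheory

private lemma taylor_bound_aux (n : ℕ) : ∀ (β : ℝ), (n:ℝ) < β → β ≤ n+1 →
    ∀ (f : ℝ → ℝ), ContDiff ℝ n f → ∀ (R : ℝ), 0 ≤ R →
    (∀ x y : ℝ, |iteratedDeriv n f x - iteratedDeriv n f y| ≤ R * |x-y|^(β-n)) →
    ∀ (x0 x : ℝ),
    |f x - ∑ i ∈ Finset.range (n+1), iteratedDeriv i f x0 / (Nat.factorial i : ℝ) * (x - x0)^i|
      ≤ R * |x - x0|^β := by
  induction n with
  | zero =>
    intro β hn hβ f hf R hR hH x0 x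
    simpa using hH x x0
  | succ n ih =>
    intro β hn hβ f hf R hR hH x0 x
    have hd : Differentiable ℝ f := hf.differentiable (by simp)
    have hf' : ContDiff ℝ n (deriv f) := by
      have := (contDiff_succ_iff_deriv (n := (n:ℕ∞))).mp (by exact_mod_cast hf)
      exact this.2.2
    have hIH := ih (β - 1) (by push_cast at hn ⊢; linarith) (by push_cast at hβ ⊢; linarith)
      (deriv f) hf' R hR (by
        intro a b
        have := hH a b
        rw [← iteratedDeriv_succ'] at *
        have he : β - 1 - (n:ℝ) = β - ((n:ℕ)+1 : ℕ) := by push_cast; ring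
        rw [he]
        exact this) x0
    set c : ℕ → ℝ := fun i => iteratedDeriv i f x0 / (Nat.factorial i : ℝ) with hc
    set g : ℝ → ℝ := fun t => f t - ∑ i ∈ Finset.range (n+2), c i * (t - x0)^i with hg
    have hg0 : g x0 = 0 := by
      simp only [hg, sub_self]
      rw [Finset.sum_range_succ']
      simp [hc, iteratedDeriv_zero]
    have hgd : ∀ t : ℝ, HasDerivAt g
        (deriv f t - ∑ i ∈ Finset.range (n+1), iteratedDeriv i (deriv f) x0 / (Nat.factorial i : ℝ) * (t - x0)^i) t := by
      intro t
      have h1 : HasDerivAt (fun t => ∑ i ∈ Finset.range (n+2), c i * (t - x0)^i)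
          (∑ i ∈ Finset.range (n+2), c i * ((i:ℝ) * (t - x0)^(i-1))) t := by
        apply HasDerivAt.fun_sum
        intro i _
        simpa using (((hasDerivAt_id t).sub_const x0).pow i).const_mul (c i)
      have h2 : (∑ i ∈ Finset.range (n+2), c i * ((i:ℝ) * (t - x0)^(i-1)))
          = ∑ i ∈ Finset.range (n+1), iteratedDeriv i (deriv f) x0 / (Nat.factorial i : ℝ) * (t - x0)^i := by
        rw [Finset.sum_range_succ']
        simp only [Nat.cast_zero, zero_mul, mul_zero, add_zero, Nat.cast_add, Nat.cast_one]
        apply Finset.sum_congr rfl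
        intro i _
        simp only [hc, Nat.add_sub_cancel, ← iteratedDeriv_succ']
        rw [Nat.factorial_succ]
        have : (Nat.factorial i : ℝ) ≠ 0 := Nat.cast_ne_zero.mpr (Nat.factorial_ne_zero i)
        push_cast
        field_simp
      rw [← h2]
      exact ((hd t).hasDerivAt).sub h1
    have key : ∀ t ∈ Set.uIcc x0 x, ‖deriv g t‖ ≤ R * |x - x0|^(β-1) := by
      intro t ht
      rw [(hgd t).deriv]
      have h3 := hIH t
      have h4 : |t - x0| ≤ |x - x0| := by
        rw [Set.mem_uIcc] at ht
        have h5 := le_abs_self (x - x0)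
        have h6 := neg_abs_le (x - x0)
        rw [abs_le]
        rcases ht with ⟨h1, h2⟩ | ⟨h1, h2⟩ <;> constructor <;> linarith
      calc ‖deriv f t - ∑ i ∈ Finset.range (n+1), iteratedDeriv i (deriv f) x0 / (Nat.factorial i : ℝ) * (t - x0)^i‖
          ≤ R * |t - x0|^(β-1) := h3
        _ ≤ R * |x - x0|^(β-1) := by
            apply mul_le_mul_of_nonneg_left _ hR
            apply Real.rpow_le_rpow (abs_nonneg _) h4
            push_cast at hn; linarith
    have hseg := Convex.norm_image_sub_le_of_norm_deriv_le
      (fun t _ => (hgd t).differentiableAt) key (convex_uIcc x0 x)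
      (Set.left_mem_uIcc) (Set.right_mem_uIcc)
    rw [hg0, sub_zero] at hseg
    have : ‖g x‖ ≤ R * |x - x0|^β := by
      calc ‖g x‖ ≤ R * |x - x0|^(β-1) * ‖x - x0‖ := hseg
        _ = R * (|x - x0|^(β-1) * |x - x0|^(1:ℝ)) := by rw [Real.rpow_one]; simp [Real.norm_eq_abs]; ring
        _ = R * |x - x0|^β := by rw [← Real.rpow_add' (abs_nonneg _) (by norm_num [ne_eq]; intro h; linarith : β - 1 + 1 ≠ 0)]; norm_num
    simpa [hg] using this

private lemma momB_aux (ψ : ℝ → ℝ) (m : ℕ) (hmom : ∫ u : ℝ, u^m * ψ u = 0) (c : ℝ) (hc : c ≠ 0) (k : ℝ) :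
    ∫ x : ℝ, (x - k/c)^m * ψ (c * x - k) = 0 := by
  have h1 : (fun x : ℝ => (x - k/c)^m * ψ (c * x - k))
      = fun x : ℝ => (fun y : ℝ => ((c * y)/c)^m * ψ (c * y)) (x - k/c) := by
    funext x
    show (x - k/c)^m * ψ (c * x - k) = ((c * (x - k/c))/c)^m * ψ (c * (x - k/c))
    have h0 : c * (x - k/c) = c * x - k := by field_simp
    rw [h0]
    have e : (c * x - k)/c = x - k/c := by field_simp
    rw [e]
  rw [h1, MeasureTheory.integral_sub_right_eq_self (fun y : ℝ => ((c * y)/c)^m * ψ (c * y)) (k/c)]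
  have h2 : (fun y : ℝ => ((c * y)/c)^m * ψ (c * y)) = fun y : ℝ => (fun u : ℝ => ((u/c)^m * ψ u)) (c * y) := by
    funext y; rfl
  rw [h2, MeasureTheory.Measure.integral_comp_mul_left (fun u : ℝ => (u/c)^m * ψ u) c]
  have h3 : (fun u : ℝ => (u/c)^m * ψ u) = fun u : ℝ => (c^m)⁻¹ * (u^m * ψ u) := by
    funext u; rw [div_pow]; ring
  rw [h3, MeasureTheory.integral_const_mul, hmom]
  simp

private lemma integrable_aux (φ ψ : ℝ → ℝ) (hφ : Continuous φ) (hψm : Measurable ψ)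
    (M : ℝ) (hM : ∀ x, |ψ x| ≤ M) (A : ℝ) (hsupp : ∀ u, ψ u ≠ 0 → |u| ≤ A)
    (c : ℝ) (hc : 0 < c) (k : ℝ) :
    Integrable (fun x => φ x * ψ (c * x - k)) := by
  have hsub : Function.support (fun x => φ x * ψ (c * x - k)) ⊆ Set.Icc ((k - A)/c) ((k + A)/c) := by
    intro x hx
    have hne : ψ (c * x - k) ≠ 0 := by
      intro h; apply hx; simp [h]
    have := hsupp _ hne
    rw [abs_le] at this
    constructor
    · rw [div_le_iff₀ hc]; linarith [this.1]
    · rw [le_div_iff₀ hc]; linarith [this.2]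
  rw [← integrableOn_iff_integrable_of_support_subset hsub]
  obtain ⟨B, hB⟩ := (isCompact_Icc (a := (k - A)/c) (b := (k + A)/c)).exists_bound_of_continuousOn
    hφ.continuousOn
  have hmeas : AEStronglyMeasurable (fun x => φ x * ψ (c * x - k)) volume :=
    (hφ.measurable.mul (hψm.comp (by fun_prop))).aestronglyMeasurable
  apply Measure.integrableOn_of_bounded (M := B * M) ((measure_Icc_lt_top).ne) hmeas
  filter_upwards [ae_restrict_mem measurableSet_Icc] with x hx
  have h1 : ‖φ x‖ ≤ B := hB x hx
  have h2 : ‖φ x * ψ (c * x - k)‖ = ‖φ x‖ * |ψ (c * x - k)| := by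
    rw [norm_mul]; rfl
  rw [h2]
  exact mul_le_mul h1 (hM _) (abs_nonneg _) (le_trans (norm_nonneg _) h1)

theorem stmt_15 (β : ℝ) (hβ : 0 < β) (k0 : ℕ) (hk0 : (k0 : ℝ) < β) (hk0' : β ≤ k0 + 1)
    (ψ : ℝ → ℝ) (hψm : Measurable ψ) (hψb : ∃ M : ℝ, ∀ x, |ψ x| ≤ M)
    (hψs : HasCompactSupport ψ)
    (hmom : ∀ m : ℕ, m ≤ k0 → ∫ x : ℝ, x ^ m * ψ x = 0) :
    ∃ C : ℝ, 0 < C ∧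
      ∀ (f : ℝ → ℝ) (R : ℝ), 0 ≤ R → ContDiff ℝ k0 f →
      (∀ x y : ℝ, |iteratedDeriv k0 f x - iteratedDeriv k0 f y| ≤ R * |x - y| ^ (β - k0)) →
      ∀ (j : ℕ) (k : ℤ),
        |∫ x : ℝ, f x * ((2:ℝ) ^ ((j : ℝ) / 2) * ψ (2 ^ j * x - k))|
          ≤ C * R * (2:ℝ) ^ (-(j : ℝ) * (β + 1 / 2)) := by
  obtain ⟨M, hM⟩ := hψb
  set M' := max M 1 with hM'def
  have hM' : ∀ x, |ψ x| ≤ M' := fun x => (hM x).trans (le_max_left _ _)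
  have hM'1 : (1:ℝ) ≤ M' := le_max_right _ _
  have hM'0 : (0:ℝ) < M' := lt_of_lt_of_le one_pos hM'1
  obtain ⟨r, hr⟩ := hψs.isBounded.subset_closedBall 0
  set A := max r 1 with hAdef
  have hA1 : (1:ℝ) ≤ A := le_max_right _ _
  have hA0 : (0:ℝ) < A := lt_of_lt_of_le one_pos hA1
  have hsupp : ∀ u, ψ u ≠ 0 → |u| ≤ A := by
    intro u hu
    have h1 : u ∈ tsupport ψ := subset_tsupport ψ hu
    have h2 := hr h1
    rw [Metric.mem_closedBall, Real.dist_eq, sub_zero] at h2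
    exact h2.trans (le_max_left _ _)
  refine ⟨2 * M' * A^(β+1), by positivity, ?_⟩
  intro f R hR hf hH j k
  set cj : ℝ := (2:ℝ)^(j:ℕ) with hcj
  have hc : (0:ℝ) < cj := by rw [hcj]; positivity
  set t : ℝ := (2:ℝ)^((j:ℝ)) with ht'
  have hct : cj = t := (Real.rpow_natCast 2 j).symm
  have ht : (0:ℝ) < t := hct ▸ hc
  set d : ℝ := (2:ℝ)^((j:ℝ)/2) with hd'
  have hd : (0:ℝ) < d := by rw [hd']; positivity
  set x0 : ℝ := (k:ℝ)/cj with hx0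
  set P : ℝ → ℝ := fun x => ∑ i ∈ Finset.range (k0+1),
    iteratedDeriv i f x0 / (Nat.factorial i : ℝ) * (x - x0)^i with hP
  have hPcont : Continuous P := by
    apply continuous_finset_sum
    intro i _
    exact continuous_const.mul ((continuous_id.sub continuous_const).pow i)
  have hfP : ∀ x, |f x - P x| ≤ R * |x - x0|^β :=
    taylor_bound_aux k0 β hk0 (by exact_mod_cast hk0') f hf R hR hH x0
  -- integrability facts
  have hI1 : Integrable (fun x => ((f x - P x) * d) * ψ (cj * x - k)) :=
    integrable_aux _ ψ ((hf.continuous.sub hPcont).mul continuous_const) hψm M' hM' A hsupp cj hc k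
  have hIP : ∀ i ∈ Finset.range (k0+1), Integrable (fun x =>
      ((iteratedDeriv i f x0 / (Nat.factorial i : ℝ) * d) * (x - x0)^i) * ψ (cj * x - k)) := by
    intro i _
    exact integrable_aux _ ψ (continuous_const.mul ((continuous_id.sub continuous_const).pow i))
      hψm M' hM' A hsupp cj hc k
  -- split the integral
  have hsplit : (fun x : ℝ => f x * (d * ψ (cj * x - k)))
      = fun x : ℝ => ((f x - P x) * d) * ψ (cj * x - k)
        + ∑ i ∈ Finset.range (k0+1),
            ((iteratedDeriv i f x0 / (Nat.factorial i : ℝ) * d) * (x - x0)^i) * ψ (cj * x - k) := by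
    funext x
    have e1 : ∑ i ∈ Finset.range (k0+1),
        ((iteratedDeriv i f x0 / (Nat.factorial i : ℝ) * d) * (x - x0)^i) * ψ (cj * x - k)
        = (∑ i ∈ Finset.range (k0+1),
            iteratedDeriv i f x0 / (Nat.factorial i : ℝ) * (x - x0)^i) * (d * ψ (cj * x - k)) := by
      rw [Finset.sum_mul]
      apply Finset.sum_congr rfl
      intro i _
      ring
    rw [e1]
    show f x * (d * ψ (cj * x - k)) = ((f x - P x) * d) * ψ (cj * x - k) + P x * (d * ψ (cj * x - k))
    ring
  have hzero : ∫ x : ℝ, ∑ i ∈ Finset.range (k0+1),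
      ((iteratedDeriv i f x0 / (Nat.factorial i : ℝ) * d) * (x - x0)^i) * ψ (cj * x - k) = 0 := by
    rw [MeasureTheory.integral_finset_sum _ hIP]
    apply Finset.sum_eq_zero
    intro i hi
    have e2 : (fun x : ℝ => ((iteratedDeriv i f x0 / (Nat.factorial i : ℝ) * d) * (x - x0)^i) * ψ (cj * x - k))
        = fun x : ℝ => (iteratedDeriv i f x0 / (Nat.factorial i : ℝ) * d) * ((x - (k:ℝ)/cj)^i * ψ (cj * x - k)) := by
      funext x; rw [hx0]; ring
    rw [e2, MeasureTheory.integral_const_mul,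
      momB_aux ψ i (hmom i (Nat.lt_succ_iff.mp (Finset.mem_range.mp hi))) cj hc.ne' (k:ℝ), mul_zero]
  have hstep : (∫ x : ℝ, f x * (d * ψ (cj * x - k)))
      = ∫ x : ℝ, ((f x - P x) * d) * ψ (cj * x - k) := by
    calc (∫ x : ℝ, f x * (d * ψ (cj * x - k)))
        = ∫ x : ℝ, (((f x - P x) * d) * ψ (cj * x - k)
            + ∑ i ∈ Finset.range (k0+1),
              ((iteratedDeriv i f x0 / (Nat.factorial i : ℝ) * d) * (x - x0)^i) * ψ (cj * x - k)) := by
          rw [← hsplit]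
      _ = (∫ x : ℝ, ((f x - P x) * d) * ψ (cj * x - k)) + ∫ x : ℝ, ∑ i ∈ Finset.range (k0+1),
              ((iteratedDeriv i f x0 / (Nat.factorial i : ℝ) * d) * (x - x0)^i) * ψ (cj * x - k) := by
          rw [MeasureTheory.integral_add hI1 (MeasureTheory.integrable_finset_sum _ hIP)]
      _ = ∫ x : ℝ, ((f x - P x) * d) * ψ (cj * x - k) := by rw [hzero, add_zero]
  rw [hstep]
  -- bound the remaining integral
  set S : Set ℝ := Set.Icc (((k:ℝ) - A)/cj) (((k:ℝ) + A)/cj) with hSdef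
  have hout : ∀ x ∉ S, ((f x - P x) * d) * ψ (cj * x - k) = 0 := by
    intro x hx
    by_contra h
    apply hx
    have hne : ψ (cj * x - k) ≠ 0 := fun h0 => h (by rw [h0, mul_zero])
    have := hsupp _ hne
    rw [abs_le] at this
    constructor
    · rw [div_le_iff₀ hc]; linarith [this.1]
    · rw [le_div_iff₀ hc]; linarith [this.2]
  rw [← MeasureTheory.setIntegral_eq_integral_of_forall_compl_eq_zero hout]
  have hCb : ∀ x ∈ S, ‖((f x - P x) * d) * ψ (cj * x - k)‖ ≤ (R * (A/cj)^β) * (d * M') := by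
    intro x hx
    have e1 : ((k:ℝ) - A)/cj = (k:ℝ)/cj - A/cj := by ring
    have e2 : ((k:ℝ) + A)/cj = (k:ℝ)/cj + A/cj := by ring
    have hxx0 : |x - x0| ≤ A/cj := by
      obtain ⟨h1, h2⟩ := hx
      rw [hSdef] at *
      rw [e1] at h1
      rw [e2] at h2
      rw [abs_le, hx0]
      constructor <;> linarith
    have hfx : |f x - P x| ≤ R * (A/cj)^β := by
      refine (hfP x).trans ?_
      apply mul_le_mul_of_nonneg_left _ hR
      exact Real.rpow_le_rpow (abs_nonneg _) hxx0 hβ.le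
    have hn : ‖((f x - P x) * d) * ψ (cj * x - k)‖ = |f x - P x| * d * |ψ (cj * x - k)| := by
      rw [norm_mul, norm_mul, Real.norm_eq_abs, Real.norm_eq_abs, Real.norm_eq_abs, abs_of_pos hd]
    rw [hn]
    have : |f x - P x| * d * |ψ (cj * x - k)| ≤ (R * (A/cj)^β) * d * M' := by
      apply mul_le_mul (mul_le_mul_of_nonneg_right hfx hd.le) (hM' _) (abs_nonneg _)
      positivity
    linarith [this]
  have hvol : (volume S).toReal = 2*A/cj := by
    rw [hSdef, Real.volume_Icc]
    have e3 : ((k:ℝ) + A)/cj - ((k:ℝ) - A)/cj = 2*A/cj := by ring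
    rw [e3, ENNReal.toReal_ofReal (by positivity)]
  have hbnd : ‖∫ x in S, ((f x - P x) * d) * ψ (cj * x - k)‖
      ≤ ((R * (A/cj)^β) * (d * M')) * (2*A/cj) := by
    have := norm_setIntegral_le_of_norm_le_const (μ := volume) (s := S)
      (by rw [hSdef]; exact measure_Icc_lt_top) hCb
    rwa [measureReal_def, hvol] at this
  rw [Real.norm_eq_abs] at hbnd
  refine hbnd.trans (le_of_eq ?_)
  -- arithmetic with powers
  have hdt : d = t ^ ((1:ℝ)/2) := by
    rw [hd', ht', ← Real.rpow_mul (by norm_num : (0:ℝ) ≤ 2)]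
    congr 1
    ring
  have hrhs : (2:ℝ)^(-(j:ℝ)*(β+1/2)) = t ^ (-(β+1/2)) := by
    rw [ht', ← Real.rpow_mul (by norm_num : (0:ℝ) ≤ 2)]
    congr 1
    ring
  rw [hct, hdt, hrhs]
  have eL : (A/t)^β = A^β * t^(-β) := by
    rw [Real.div_rpow hA0.le ht.le, Real.rpow_neg ht.le]
    ring
  have eA : A^(β+1) = A^β * A := by rw [Real.rpow_add hA0, Real.rpow_one]
  have eT : t^(-(β+1/2)) = t^(-β) * (t^((1:ℝ)/2) * t^(-1:ℝ)) := by
    rw [← Real.rpow_add ht, ← Real.rpow_add ht]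
    congr 1
    ring
  have eI : t⁻¹ = t^(-1:ℝ) := (Real.rpow_neg_one t).symm
  rw [eL, eA, eT, div_eq_mul_inv (2*A) t, eI]
  ring
end

section
/- Let f ∈ H^β and let a = a(β) be as in the local fluctuation lemma ((e^a-1) + a^β/⌊β⌋! ≤ 1/2). Fix x_0 with f(x_0) > 0 and suppose the interval I has length |I| ≤ a (f(x_0)/‖f‖_{H^β})^{1/β} and contains x_0. Then f(x) ≥ f(x_0)/2 > 0 for all x ∈ I, and the restriction of √f to I is ⌊β⌋-times differentiable with ⌊β⌋-th derivative Hölder of exponent β-⌊β⌋ and constant at most C(β) ‖f‖_{H^β} / √(f(x_0)). -/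
open Real Set Finset


-- one-sided signed comparison
private lemma right_case {u : ℝ → ℝ} (hu : Differentiable ℝ u) {x₀ x K γ : ℝ}
    (hx : x₀ ≤ x) (h0 : u x₀ = 0) (hK : 0 ≤ K) (hγ : 0 < γ)
    (hb : ∀ t ∈ Icc x₀ x, deriv u t ≤ K * (t - x₀) ^ γ) :
    u x ≤ K * (x - x₀) ^ (γ+1) / (γ+1) := by
  set φ : ℝ → ℝ := fun t => K * (t - x₀) ^ (γ+1) / (γ+1) - u t with hφ
  have hγ1 : (0:ℝ) < γ + 1 := by linarith
  have hd : ∀ t, HasDerivAt (fun s => (s - x₀) ^ (γ+1)) ((γ+1) * (t - x₀) ^ γ) t := by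
    intro t
    have h1 : HasDerivAt (fun s : ℝ => s - x₀) 1 t := (hasDerivAt_id t).sub_const x₀
    have := h1.rpow_const (p := γ+1) (Or.inr (by linarith))
    simpa using this
  have hdiffφ : Differentiable ℝ φ := by
    refine Differentiable.sub ?_ hu
    exact (Differentiable.div_const (Differentiable.const_mul
      (fun t => (hd t).differentiableAt) K) (γ+1))
  have hderφ : ∀ t, deriv φ t = K * (t - x₀) ^ γ - deriv u t := by
    intro t
    have h2 : HasDerivAt (fun s => K * (s - x₀) ^ (γ+1) / (γ+1))
        (K * (t - x₀) ^ γ) t := by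
      have := ((hd t).const_mul K).div_const (γ+1)
      refine this.congr_deriv (Eq.symm ?_)
      field_simp
    rw [hφ]
    rw [deriv_fun_sub h2.differentiableAt (hu t)]
    rw [h2.deriv]
  have hmono : MonotoneOn φ (Icc x₀ x) := by
    refine monotoneOn_of_deriv_nonneg (convex_Icc _ _) hdiffφ.continuous.continuousOn
      (hdiffφ.differentiableOn) ?_
    intro t ht
    rw [interior_Icc] at ht
    rw [hderφ t]
    have := hb t (Ioo_subset_Icc_self ht)
    linarith
  have h1 := hmono (left_mem_Icc.mpr hx) (right_mem_Icc.mpr hx) hx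
  rw [hφ] at h1
  simp only [sub_self, h0] at h1
  rw [Real.zero_rpow (ne_of_gt hγ1)] at h1
  simp only [mul_zero, zero_div, sub_zero, zero_sub] at h1
  linarith

private lemma right_case_abs {u : ℝ → ℝ} (hu : Differentiable ℝ u) {x₀ x K γ : ℝ}
    (hx : x₀ ≤ x) (h0 : u x₀ = 0) (hK : 0 ≤ K) (hγ : 0 < γ)
    (hb : ∀ t ∈ Icc x₀ x, |deriv u t| ≤ K * (t - x₀) ^ γ) :
    |u x| ≤ K * (x - x₀) ^ (γ+1) / (γ+1) := by
  have h1 := right_case hu hx h0 hK hγ (fun t ht => (abs_le.mp (hb t ht)).2)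
  have h2' := right_case (u := fun t => -u t) hu.neg hx (by simp [h0]) hK hγ (fun t ht => by
    rw [deriv.fun_neg]
    linarith [(abs_le.mp (hb t ht)).1])
  have h2 : -(u x) ≤ K * (x - x₀) ^ (γ+1) / (γ+1) := h2'
  exact abs_le.mpr ⟨by linarith, h1⟩

lemma comparison_lemma {u : ℝ → ℝ} (hu : Differentiable ℝ u) {x₀ x K γ : ℝ}
    (h0 : u x₀ = 0) (hK : 0 ≤ K) (hγ : 0 < γ)
    (hb : ∀ t ∈ uIcc x₀ x, |deriv u t| ≤ K * |t - x₀| ^ γ) :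
    |u x| ≤ K * |x - x₀| ^ (γ+1) / (γ+1) := by
  rcases le_total x₀ x with hx | hx
  · have : ∀ t ∈ Icc x₀ x, |deriv u t| ≤ K * (t - x₀) ^ γ := by
      intro t ht
      have h1 := hb t (by rw [uIcc_of_le hx]; exact ht)
      rwa [abs_of_nonneg (by linarith [ht.1] : (0:ℝ) ≤ t - x₀)] at h1
    have := right_case_abs hu hx h0 hK hγ this
    rwa [abs_of_nonneg (by linarith : (0:ℝ) ≤ x - x₀)]
  · set v : ℝ → ℝ := fun t => u (2*x₀ - t) with hv
    have hdv : Differentiable ℝ v := hu.comp ((differentiable_const _).sub differentiable_id)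
    have hvderiv : ∀ t, deriv v t = -deriv u (2*x₀ - t) := by
      intro t
      exact deriv_comp_const_sub u (2*x₀) t
    have hx' : x₀ ≤ 2*x₀ - x := by linarith
    have hb' : ∀ t ∈ Icc x₀ (2*x₀ - x), |deriv v t| ≤ K * (t - x₀) ^ γ := by
      intro t ht
      rw [hvderiv, abs_neg]
      have hmem : 2*x₀ - t ∈ uIcc x₀ x := by
        rw [uIcc_of_ge hx]
        constructor <;> [linarith [ht.2]; linarith [ht.1]]
      have := hb _ hmem
      have habs : |2*x₀ - t - x₀| = t - x₀ := by
        rw [abs_of_nonpos (by linarith [ht.1])]; ring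
      rwa [habs] at this
    have h0v : v x₀ = 0 := by simp [hv, show 2*x₀ - x₀ = x₀ by ring, h0]
    have := right_case_abs hdv hx' h0v hK hγ hb'
    have hvx : v (2*x₀ - x) = u x := by
      show u (2*x₀ - (2*x₀ - x)) = u x
      rw [show (2*x₀ - (2*x₀ - x) : ℝ) = x by ring]
    rw [hvx] at this
    have : |u x| ≤ K * (2*x₀ - x - x₀) ^ (γ+1) / (γ+1) := this
    rwa [show (2*x₀ - x - x₀ : ℝ) = x₀ - x by ring, ← abs_of_nonneg (by linarith : (0:ℝ) ≤ x₀ - x), abs_sub_comm] at this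

section
variable {k0 : ℕ} {θ : ℝ}

lemma taylor_flat (hθ : 0 < θ) {f : ℝ → ℝ} (hf : ContDiff ℝ k0 f)
    {c d x₀ R : ℝ} (hx₀ : x₀ ∈ Icc c d) (hR : 0 ≤ R)
    (hhold : ∀ t ∈ Icc c d, |iteratedDeriv k0 f t - iteratedDeriv k0 f x₀| ≤ R * |t - x₀| ^ θ) :
    ∀ x ∈ Icc c d,
      |f x - ∑ j ∈ Finset.range (k0+1),
          iteratedDeriv j f x₀ * (x - x₀)^j / (j.factorial : ℝ)|
        ≤ R * |x - x₀| ^ (θ + k0) / (k0.factorial : ℝ) := by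
  set Dfac : ℕ → ℝ := fun i => ∏ j ∈ Finset.range i, (θ + j + 1) with hDfac
  have hDpos : ∀ i, 0 < Dfac i := by
    intro i
    refine Finset.prod_pos (fun j hj => ?_)
    have : (0:ℝ) ≤ j := Nat.cast_nonneg j
    linarith
  have key : ∀ i, i ≤ k0 → ∀ x ∈ Icc c d,
      |iteratedDeriv (k0 - i) f x - ∑ j ∈ Finset.range (i+1),
          iteratedDeriv (k0 - i + j) f x₀ * (x - x₀)^j / (j.factorial : ℝ)|
        ≤ R * |x - x₀| ^ (θ + i) / Dfac i := by
    intro i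
    induction i with
    | zero =>
      intro _ x hx
      have h1 : ∑ j ∈ Finset.range 1,
          iteratedDeriv (k0 - 0 + j) f x₀ * (x - x₀)^j / (j.factorial : ℝ)
          = iteratedDeriv k0 f x₀ := by simp
      rw [h1]
      have h2 : Dfac 0 = 1 := by simp [hDfac]
      rw [h2]
      simpa using hhold x hx
    | succ i IH =>
      intro hik x hx
      have hik' : i ≤ k0 := le_trans (Nat.le_succ i) hik
      -- the function u
      set u : ℝ → ℝ := fun t => iteratedDeriv (k0 - (i+1)) f t - ∑ j ∈ Finset.range (i+2),
          iteratedDeriv (k0 - (i+1) + j) f x₀ * (t - x₀)^j / (j.factorial : ℝ) with hu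
      have hlt : k0 - (i+1) < k0 := by omega
      have hdiff1 : Differentiable ℝ (iteratedDeriv (k0 - (i+1)) f) :=
        hf.differentiable_iteratedDeriv _ (by exact_mod_cast hlt)
      have hud : ∀ t, HasDerivAt u
          (iteratedDeriv (k0 - i) f t - ∑ j ∈ Finset.range (i+1),
            iteratedDeriv (k0 - i + j) f x₀ * (t - x₀)^j / (j.factorial : ℝ)) t := by
        intro t
        have hA : HasDerivAt (iteratedDeriv (k0 - (i+1)) f) (iteratedDeriv (k0 - i) f t) t := by
          have := (hdiff1 t).hasDerivAt
          have hd : deriv (iteratedDeriv (k0 - (i+1)) f) t = iteratedDeriv (k0 - i) f t := by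
            rw [← iteratedDeriv_succ]
            congr 1
            omega
          rwa [hd] at this
        have hB : HasDerivAt (fun t => ∑ j ∈ Finset.range (i+2),
            iteratedDeriv (k0 - (i+1) + j) f x₀ * (t - x₀)^j / (j.factorial : ℝ))
            (∑ j ∈ Finset.range (i+1),
            iteratedDeriv (k0 - i + j) f x₀ * (t - x₀)^j / (j.factorial : ℝ)) t := by
          have hterm : ∀ j : ℕ, HasDerivAt (fun t : ℝ =>
              iteratedDeriv (k0 - (i+1) + j) f x₀ * (t - x₀)^j / (j.factorial : ℝ))
              (iteratedDeriv (k0 - (i+1) + j) f x₀ * (j * (t - x₀)^(j-1)) / (j.factorial : ℝ)) t := by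
            intro j
            have h1 : HasDerivAt (fun t : ℝ => t - x₀) 1 t := (hasDerivAt_id t).sub_const x₀
            have h2 := (h1.pow j).const_mul (iteratedDeriv (k0 - (i+1) + j) f x₀)
            have h3 := h2.div_const (j.factorial : ℝ)
            refine h3.congr_deriv (Eq.symm ?_)
            ring
          have hsum : HasDerivAt (fun t : ℝ => ∑ j ∈ Finset.range (i+2),
              iteratedDeriv (k0 - (i+1) + j) f x₀ * (t - x₀)^j / (j.factorial : ℝ))
              (∑ j ∈ Finset.range (i+2),
              iteratedDeriv (k0 - (i+1) + j) f x₀ * ((j:ℝ) * (t - x₀)^(j-1)) / (j.factorial : ℝ)) t :=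
            HasDerivAt.fun_sum (fun j _ => hterm j)
          refine hsum.congr_deriv (Eq.symm ?_)
          conv_rhs => rw [Finset.sum_range_succ']
          simp only [Nat.cast_zero, zero_mul, mul_zero, zero_div, add_zero]
          refine Finset.sum_congr rfl (fun j hj => ?_)
          have hfac : ((j+1).factorial : ℝ) = (j+1) * (j.factorial : ℝ) := by
            rw [Nat.factorial_succ]; push_cast; ring
          have hidx : k0 - (i+1) + (j+1) = k0 - i + j := by omega
          rw [hidx, hfac]
          have hjne : ((j:ℝ) + 1) ≠ 0 := by positivity
          have hfne : ((j.factorial : ℝ)) ≠ 0 := by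
            exact_mod_cast Nat.factorial_ne_zero j
          field_simp
          rw [Nat.add_sub_cancel]; push_cast; ring
        exact hA.sub hB
      have hu0 : u x₀ = 0 := by
        rw [hu]
        simp only [sub_self]
        rw [Finset.sum_eq_single 0]
        · simp
        · intro b _ hb
          rw [zero_pow hb, mul_zero, zero_div]
        · intro h; exact absurd (Finset.mem_range.mpr (by omega)) h
      have hudiff : Differentiable ℝ u := fun t => (hud t).differentiableAt
      have hb : ∀ t ∈ uIcc x₀ x, |deriv u t| ≤ (R / Dfac i) * |t - x₀| ^ (θ + i) := by
        intro t ht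
        have htcd : t ∈ Icc c d := by
          have : uIcc x₀ x ⊆ Icc c d := uIcc_subset_Icc hx₀ hx
          exact this ht
        rw [(hud t).deriv]
        calc _ ≤ R * |t - x₀| ^ (θ + (i:ℝ)) / Dfac i := IH hik' t htcd
          _ = R / Dfac i * |t - x₀| ^ (θ + (i:ℝ)) := by ring
      have hcomp := comparison_lemma hudiff hu0
        (div_nonneg hR (le_of_lt (hDpos i))) (by positivity : (0:ℝ) < θ + i) hb
      have hux : |u x| ≤ R / Dfac i * |x - x₀| ^ (θ + i + 1) / (θ + i + 1) := hcomp
      have hfin : R / Dfac i * |x - x₀| ^ (θ + i + 1) / (θ + i + 1)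
          = R * |x - x₀| ^ (θ + (i+1:ℕ)) / Dfac (i+1) := by
        have h1 : Dfac (i+1) = Dfac i * (θ + i + 1) := by
          rw [hDfac]; exact Finset.prod_range_succ _ i
        rw [h1]
        have h2 : (θ + (i+1:ℕ) : ℝ) = θ + i + 1 := by push_cast; ring
        rw [h2]
        field_simp
      rw [← hfin]
      exact hux
  -- conclude
  intro x hx
  have := key k0 le_rfl x hx
  simp only [Nat.sub_self] at this
  have hDk : (k0.factorial : ℝ) ≤ Dfac k0 := by
    rw [hDfac]
    calc (k0.factorial : ℝ) = ∏ j ∈ Finset.range k0, ((j:ℝ) + 1) := by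
          rw [← Finset.prod_range_add_one_eq_factorial k0]
          push_cast
          exact Finset.prod_congr rfl (fun j _ => by ring)
      _ ≤ ∏ j ∈ Finset.range k0, (θ + j + 1) := by
          refine Finset.prod_le_prod (fun j _ => by positivity) (fun j _ => by linarith)
  calc |f x - ∑ j ∈ Finset.range (k0+1),
          iteratedDeriv j f x₀ * (x - x₀)^j / (j.factorial : ℝ)|
      = |iteratedDeriv 0 f x - ∑ j ∈ Finset.range (k0+1),
          iteratedDeriv (0 + j) f x₀ * (x - x₀)^j / (j.factorial : ℝ)| := by
        simp [iteratedDeriv_zero]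
    _ ≤ R * |x - x₀| ^ (θ + k0) / Dfac k0 := this
    _ ≤ R * |x - x₀| ^ (θ + k0) / (k0.factorial : ℝ) := by
        apply div_le_div_of_nonneg_left (by positivity)
          (by exact_mod_cast Nat.factorial_pos k0) hDk

end


-- Lemma W: within = global iterated deriv for globally smooth functions
lemma iterDW_eq (n : ℕ) {N : ℕ} (hn : n ≤ N) {f : ℝ → ℝ} (hf : ContDiff ℝ N f)
    {s : Set ℝ} (hs : UniqueDiffOn ℝ s) : ∀ x ∈ s,
    iteratedDerivWithin n f s x = iteratedDeriv n f x := by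
  induction n with
  | zero => intro x hx; simp
  | succ n IH =>
    intro x hx
    rw [iteratedDerivWithin_succ, iteratedDeriv_succ]
    rw [derivWithin_congr (fun y hy => IH (le_trans (Nat.le_succ n) hn) y hy)
      (IH (le_trans (Nat.le_succ n) hn) x hx)]
    exact DifferentiableAt.derivWithin
      ((hf.differentiable_iteratedDeriv n (by exact_mod_cast hn)).differentiableAt) (hs x hx)


lemma pascal_sum (A B : ℕ → ℝ) (n : ℕ) :
    ∑ i ∈ range (n+1), ((n.choose i : ℝ) * (A (i+1) * B (n-i))
        + (n.choose i : ℝ) * (A i * B (n+1-i)))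
    = ∑ i ∈ range (n+2), ((n+1).choose i : ℝ) * (A i * B (n+1-i)) := by
  rw [Finset.sum_add_distrib]
  conv_rhs => rw [Finset.sum_range_succ']
  have hR : ∀ i ∈ range (n+1), (((n+1).choose (i+1):ℝ)) * (A (i+1) * B (n+1-(i+1)))
      = (n.choose i:ℝ) * (A (i+1) * B (n-i)) + (n.choose (i+1):ℝ) * (A (i+1) * B (n-i)) := by
    intro i hi
    have h1 : n+1-(i+1) = n - i := by omega
    rw [h1, Nat.choose_succ_succ, Nat.cast_add]; ring
  rw [Finset.sum_congr rfl hR, Finset.sum_add_distrib]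
  have hS2 : ∑ i ∈ range (n+1), (n.choose i:ℝ) * (A i * B (n+1-i))
      = (∑ i ∈ range (n+1), (n.choose (i+1):ℝ) * (A (i+1) * B (n-i)))
        + ((n+1).choose 0:ℝ) * (A 0 * B (n+1-0)) := by
    conv_lhs => rw [Finset.sum_range_succ']
    congr 1
    · rw [Finset.sum_range_succ, Nat.choose_succ_self, Nat.cast_zero, zero_mul, add_zero]
      exact Finset.sum_congr rfl (fun i hi => by rw [show n+1-(i+1) = n-i by omega])
    · simp
  rw [hS2]; ring

lemma leibniz_within {N : ℕ} {s : Set ℝ} (hs : UniqueDiffOn ℝ s)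
    {u v : ℝ → ℝ} (hu : ContDiffOn ℝ N u s) (hv : ContDiffOn ℝ N v s) :
    ∀ n ≤ N, ∀ x ∈ s,
    iteratedDerivWithin n (fun t => u t * v t) s x
      = ∑ i ∈ Finset.range (n+1), (n.choose i : ℝ) *
          (iteratedDerivWithin i u s x * iteratedDerivWithin (n - i) v s x) := by
  intro n
  induction n with
  | zero => intro _ x hx; simp
  | succ n IH =>
    intro hn x hx
    have hn' : n ≤ N := le_trans (Nat.le_succ n) hn
    have hD : ∀ (w : ℝ → ℝ), ContDiffOn ℝ N w s → ∀ i < N, ∀ y ∈ s,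
        HasDerivWithinAt (iteratedDerivWithin i w s)
          (iteratedDerivWithin (i+1) w s y) s y := by
      intro w hw i hi y hy
      have hdiff : DifferentiableWithinAt ℝ (iteratedDerivWithin i w s) s y :=
        (hw.differentiableOn_iteratedDerivWithin (by exact_mod_cast hi) hs) y hy
      have := hdiff.hasDerivWithinAt
      rwa [← iteratedDerivWithin_succ] at this
    rw [iteratedDerivWithin_succ]
    have heq : Set.EqOn (iteratedDerivWithin n (fun t => u t * v t) s)
        (fun y => ∑ i ∈ Finset.range (n+1), (n.choose i : ℝ) *
          (iteratedDerivWithin i u s y * iteratedDerivWithin (n - i) v s y)) s :=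
      fun y hy => IH hn' y hy
    rw [derivWithin_congr heq (heq hx)]
    have hder : HasDerivWithinAt
        (fun y => ∑ i ∈ Finset.range (n+1), (n.choose i : ℝ) *
          (iteratedDerivWithin i u s y * iteratedDerivWithin (n - i) v s y))
        (∑ i ∈ Finset.range (n+1), (n.choose i : ℝ) *
          (iteratedDerivWithin (i+1) u s x * iteratedDerivWithin (n - i) v s x
           + iteratedDerivWithin i u s x * iteratedDerivWithin (n - i + 1) v s x)) s x := by
      refine HasDerivWithinAt.fun_sum (fun i hi => ?_)
      have hiN : i < N := lt_of_lt_of_le (Finset.mem_range.mp hi) hn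
      have hniN : n - i < N :=
        lt_of_le_of_lt (Nat.sub_le n i) (lt_of_lt_of_le (Nat.lt_succ_self n) hn)
      exact ((hD u hu i hiN x hx).mul (hD v hv (n-i) hniN x hx)).const_mul _
    rw [hder.derivWithin (hs x hx)]
    have hsplit : ∀ i ∈ Finset.range (n+1), (n.choose i : ℝ) *
          (iteratedDerivWithin (i+1) u s x * iteratedDerivWithin (n - i) v s x
           + iteratedDerivWithin i u s x * iteratedDerivWithin (n - i + 1) v s x)
        = (n.choose i : ℝ) * (iteratedDerivWithin (i+1) u s x * iteratedDerivWithin (n - i) v s x)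
          + (n.choose i : ℝ) * (iteratedDerivWithin i u s x * iteratedDerivWithin (n + 1 - i) v s x) := by
      intro i hi
      have : n - i + 1 = n + 1 - i := by
        have := Finset.mem_range.mp hi; omega
      rw [this]; ring
    rw [Finset.sum_congr rfl hsplit]
    exact pascal_sum (fun i => iteratedDerivWithin i u s x)
      (fun i => iteratedDerivWithin i v s x) n

structure Flat (k0 : ℕ) (θ : ℝ) (f : ℝ → ℝ) (F P c d : ℝ) : Prop where
  hcd : c < d
  hF : 0 < F
  hP : 0 < P
  hsm : ContDiff ℝ k0 f
  hlow : ∀ x ∈ Icc c d, F/2 ≤ f x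
  hup : ∀ x ∈ Icc c d, f x ≤ 3/2 * F
  hder : ∀ j, j ≤ k0 → ∀ x ∈ Icc c d, |iteratedDeriv j f x| ≤ 3/2 * F * P^j
  hhold : ∀ j, j ≤ k0 → ∀ x ∈ Icc c d, ∀ y ∈ Icc c d,
      |iteratedDeriv j f x - iteratedDeriv j f y| ≤ 3/2 * F * P^j * P^θ * |x - y|^θ
  hconv : ∀ x ∈ Icc c d, ∀ y ∈ Icc c d, |x - y| ≤ P^(θ-1:ℝ) * |x - y|^θ

namespace Flat

variable {k0 : ℕ} {θ : ℝ} {f : ℝ → ℝ} {F P c d : ℝ}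

lemma hfpos (h : Flat k0 θ f F P c d) : ∀ x ∈ Icc c d, 0 < f x :=
  fun x hx => lt_of_lt_of_le (by linarith [h.hF] : (0:ℝ) < F/2) (h.hlow x hx)

lemma hglow (h : Flat k0 θ f F P c d) : ∀ x ∈ Icc c d, Real.sqrt F / 2 ≤ Real.sqrt (f x) := by
  intro x hx
  have h1 : (Real.sqrt F / 2)^2 ≤ f x := by
    have : (Real.sqrt F)^2 = F := Real.sq_sqrt h.hF.le
    have h2 := h.hlow x hx
    nlinarith [Real.sqrt_nonneg F]
  exact Real.le_sqrt_of_sq_le h1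

lemma hghigh (h : Flat k0 θ f F P c d) : ∀ x ∈ Icc c d, Real.sqrt (f x) ≤ 2 * Real.sqrt F := by
  intro x hx
  have h1 : f x ≤ (2 * Real.sqrt F)^2 := by
    have : (Real.sqrt F)^2 = F := Real.sq_sqrt h.hF.le
    have h2 := h.hup x hx
    nlinarith [Real.sqrt_nonneg F]
  calc Real.sqrt (f x) ≤ Real.sqrt ((2*Real.sqrt F)^2) := Real.sqrt_le_sqrt h1
    _ = 2 * Real.sqrt F := Real.sqrt_sq (by positivity)

lemma hgsm (h : Flat k0 θ f F P c d) :
    ContDiffOn ℝ k0 (fun t => Real.sqrt (f t)) (Icc c d) :=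
  (h.hsm.contDiffOn).sqrt (fun x hx => ne_of_gt (h.hfpos x hx))

end Flat

lemma supBound (k0 : ℕ) (θ : ℝ) : ∀ m, m ≤ k0 → ∃ B : ℝ, 1 ≤ B ∧
    ∀ {f : ℝ → ℝ} {F P c d : ℝ}, Flat k0 θ f F P c d → ∀ j, j ≤ m → ∀ x ∈ Icc c d,
      |iteratedDerivWithin j (fun t => Real.sqrt (f t)) (Icc c d) x|
        ≤ B * Real.sqrt F * P^j := by
  intro m
  induction m with
  | zero =>
    intro _
    refine ⟨2, by norm_num, ?_⟩
    intro f F P c d h j hj x hx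
    interval_cases j
    rw [iteratedDerivWithin_zero, pow_zero, mul_one]
    rw [abs_of_nonneg (Real.sqrt_nonneg _)]
    exact h.hghigh x hx
  | succ m IH =>
    intro hmk
    obtain ⟨B, hB1, hB⟩ := IH (le_trans (Nat.le_succ m) hmk)
    refine ⟨B + (k0 * 2^k0 * B^2) + 2, by nlinarith [sq_nonneg B, pow_pos (by norm_num : (0:ℝ) < 2) k0, Nat.cast_nonneg (α := ℝ) k0, mul_nonneg (mul_nonneg (Nat.cast_nonneg (α := ℝ) k0) (pow_pos (by norm_num : (0:ℝ) < 2) k0).le) (sq_nonneg B)], ?_⟩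
    intro f F P c d h j hj x hx
    have hsf : (0:ℝ) < Real.sqrt F := Real.sqrt_pos.mpr h.hF
    have hPp : (0:ℝ) < P := h.hP
    have hBig : (0:ℝ) ≤ k0 * 2^k0 * B^2 := by positivity
    rcases Nat.lt_or_ge j (m+1) with hjm | hjm
    · -- j ≤ m : reuse IH with a larger constant
      have h1 := hB h j (by omega) x hx
      have h2 : B * Real.sqrt F * P ^ j ≤ (B + (k0 * 2^k0 * B^2) + 2) * Real.sqrt F * P ^ j := by
        have : (0:ℝ) ≤ Real.sqrt F * P ^ j :=
          mul_nonneg (Real.sqrt_nonneg _) (pow_nonneg hPp.le _)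
        nlinarith
      linarith
    · have hj1 : j = m + 1 := le_antisymm hj hjm
      subst hj1
      set g : ℝ → ℝ := fun t => Real.sqrt (f t) with hg
      have hUD : UniqueDiffOn ℝ (Icc c d) := uniqueDiffOn_Icc h.hcd
      set D : ℕ → ℝ → ℝ := fun i => iteratedDerivWithin i g (Icc c d) with hDdef
      have hkk0 : m + 1 ≤ k0 := hmk
      have hss : Real.sqrt F * Real.sqrt F = F := Real.mul_self_sqrt h.hF.le
      have hident : iteratedDeriv (m+1) f x
          = ∑ i ∈ Finset.range (m+2), ((m+1).choose i : ℝ) * (D i x * D (m+1-i) x) := by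
        have e1 : iteratedDerivWithin (m+1) f (Icc c d) x = iteratedDeriv (m+1) f x :=
          iterDW_eq (m+1) hkk0 h.hsm hUD x hx
        have e2 : Set.EqOn (fun t => g t * g t) f (Icc c d) := fun t ht =>
          Real.mul_self_sqrt (h.hfpos t ht).le
        have e3 := iteratedDerivWithin_congr e2 (n := m+1) hx
        rw [← e1, ← e3]
        exact leibniz_within hUD h.hgsm h.hgsm (m+1) hkk0 x hx
      rw [Finset.sum_range_succ] at hident
      conv_rhs at hident => rw [Finset.sum_range_succ']
      simp only [Nat.choose_self, Nat.choose_zero_right, Nat.cast_one, one_mul,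
        Nat.sub_self, Nat.sub_zero, Nat.succ_sub_succ] at hident
      -- hident : f^{(m+1)} x = (∑ i ∈ range m, C(m+1,i+1)*(D(i+1)x * D(m-i)x) + D 0 x * D (m+1) x)
      --                        + D (m+1) x * D 0 x
      have hmidb : |∑ i ∈ Finset.range m, (((m+1).choose (i+1) : ℕ) : ℝ) * (D (i+1) x * D (m-i) x)|
          ≤ (k0 * 2^k0 * B^2) * (F * P^(m+1)) := by
        calc |∑ i ∈ Finset.range m, (((m+1).choose (i+1) : ℕ) : ℝ) * (D (i+1) x * D (m-i) x)|
            ≤ ∑ i ∈ Finset.range m, |(((m+1).choose (i+1) : ℕ) : ℝ) * (D (i+1) x * D (m-i) x)| :=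
              Finset.abs_sum_le_sum_abs _ _
          _ ≤ ∑ _i ∈ Finset.range m, (2:ℝ)^k0 * B^2 * (F * P^(m+1)) := by
              refine Finset.sum_le_sum (fun i hi => ?_)
              have him : i < m := Finset.mem_range.mp hi
              have h1 := hB h (i+1) (by omega) x hx
              have h2 := hB h (m-i) (by omega) x hx
              have hc : (((m+1).choose (i+1) : ℕ) : ℝ) ≤ 2^k0 := by
                have hle : (m+1).choose (i+1) ≤ 2^(m+1) := by
                  calc (m+1).choose (i+1) ≤ ∑ j ∈ Finset.range (m+2), (m+1).choose j :=
                        Finset.single_le_sum (fun _ _ => Nat.zero_le _)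
                          (Finset.mem_range.mpr (by omega))
                    _ = 2^(m+1) := Nat.sum_range_choose (m+1)
                calc (((m+1).choose (i+1) : ℕ) : ℝ) ≤ ((2^(m+1) : ℕ) : ℝ) := by exact_mod_cast hle
                  _ = 2^(m+1) := by push_cast; ring
                  _ ≤ 2^k0 := by
                    apply pow_le_pow_right₀ (by norm_num : (1:ℝ) ≤ 2) hkk0
              calc |(((m+1).choose (i+1) : ℕ) : ℝ) * (D (i+1) x * D (m-i) x)|
                  = (((m+1).choose (i+1) : ℕ) : ℝ) * (|D (i+1) x| * |D (m-i) x|) := by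
                    rw [abs_mul, abs_mul, abs_of_nonneg (Nat.cast_nonneg _)]
                _ ≤ 2^k0 * ((B * Real.sqrt F * P^(i+1)) * (B * Real.sqrt F * P^(m-i))) := by
                    apply mul_le_mul hc ?_ (mul_nonneg (abs_nonneg _) (abs_nonneg _))
                      (by positivity)
                    exact mul_le_mul h1 h2 (abs_nonneg _)
                      (mul_nonneg (mul_nonneg (by linarith : (0:ℝ) ≤ B) (Real.sqrt_nonneg _))
                        (pow_nonneg hPp.le _))
                _ = (2:ℝ)^k0 * B^2 * (F * P^(m+1)) := by
                    have hpp : P^(i+1) * P^(m-i) = P^(m+1) := by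
                      rw [← pow_add]; congr 1; omega
                    calc (2:ℝ)^k0 * ((B * Real.sqrt F * P^(i+1)) * (B * Real.sqrt F * P^(m-i)))
                        = 2^k0 * B^2 * ((Real.sqrt F * Real.sqrt F) * (P^(i+1) * P^(m-i))) := by ring
                      _ = (2:ℝ)^k0 * B^2 * (F * P^(m+1)) := by rw [hss, hpp]
          _ = (m:ℝ) * ((2:ℝ)^k0 * B^2 * (F * P^(m+1))) := by
              rw [Finset.sum_const, Finset.card_range, nsmul_eq_mul]
          _ ≤ (k0 * 2^k0 * B^2) * (F * P^(m+1)) := by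
              have hmk0 : (m:ℝ) ≤ k0 := by exact_mod_cast (by omega : m ≤ k0)
              have : (0:ℝ) ≤ (2:ℝ)^k0 * B^2 * (F * P^(m+1)) :=
                mul_nonneg (mul_nonneg (by positivity) (sq_nonneg _))
                  (mul_nonneg h.hF.le (pow_nonneg hPp.le _))
              nlinarith
      have hfd := h.hder (m+1) hkk0 x hx
      have hg0 : Real.sqrt F / 2 ≤ D 0 x := by
        have : D 0 x = g x := by rw [hDdef]; simp
        rw [this]
        exact h.hglow x hx
      have hkey : Real.sqrt F * |D (m+1) x|
          ≤ (3/2) * (F * P^(m+1)) + (k0 * 2^k0 * B^2) * (F * P^(m+1)) := by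
        calc Real.sqrt F * |D (m+1) x| ≤ (2 * D 0 x) * |D (m+1) x| := by
              apply mul_le_mul_of_nonneg_right (by linarith) (abs_nonneg _)
          _ = |2 * (D 0 x * D (m+1) x)| := by
              rw [abs_mul, abs_mul, abs_of_nonneg (by linarith : (0:ℝ) ≤ D 0 x),
                abs_of_nonneg (by norm_num : (0:ℝ) ≤ (2:ℝ))]
              ring
          _ = |iteratedDeriv (m+1) f x
                - ∑ i ∈ Finset.range m, (((m+1).choose (i+1) : ℕ) : ℝ) * (D (i+1) x * D (m-i) x)| := by
              congr 1
              linear_combination -hident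
          _ ≤ |iteratedDeriv (m+1) f x|
              + |∑ i ∈ Finset.range m, (((m+1).choose (i+1) : ℕ) : ℝ) * (D (i+1) x * D (m-i) x)| :=
              abs_sub _ _
          _ ≤ (3/2) * (F * P^(m+1)) + (k0 * 2^k0 * B^2) * (F * P^(m+1)) := by
              have : (3:ℝ)/2 * F * P^(m+1) = 3/2 * (F * P^(m+1)) := by ring
              rw [this] at hfd
              exact add_le_add hfd hmidb
      have hfinal : |D (m+1) x| ≤ (B + (k0 * 2^k0 * B^2) + 2) * Real.sqrt F * P^(m+1) := by
        have hRHS : (3/2) * (F * P^(m+1)) + (k0 * 2^k0 * B^2) * (F * P^(m+1))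
            ≤ Real.sqrt F * ((B + (k0 * 2^k0 * B^2) + 2) * Real.sqrt F * P^(m+1)) := by
          have expand : Real.sqrt F * ((B + (k0 * 2^k0 * B^2) + 2) * Real.sqrt F * P^(m+1))
              = (B + (k0 * 2^k0 * B^2) + 2) * (F * P^(m+1)) := by
            calc Real.sqrt F * ((B + (k0 * 2^k0 * B^2) + 2) * Real.sqrt F * P^(m+1))
                = (B + (k0 * 2^k0 * B^2) + 2) * ((Real.sqrt F * Real.sqrt F) * P^(m+1)) := by ring
              _ = (B + (k0 * 2^k0 * B^2) + 2) * (F * P^(m+1)) := by rw [hss]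
          rw [expand]
          have hFP : (0:ℝ) ≤ F * P^(m+1) := mul_nonneg h.hF.le (pow_nonneg hPp.le _)
          nlinarith
        have := le_trans hkey hRHS
        exact le_of_mul_le_mul_left this hsf
      exact hfinal


lemma choose_cast_le_two_pow {n j k : ℕ} (hk : n ≤ k) : ((n.choose j : ℕ) : ℝ) ≤ 2^k := by
  have h1 : n.choose j ≤ 2^n := by
    rcases le_or_gt j n with hj | hj
    · calc n.choose j ≤ ∑ i ∈ Finset.range (n+1), n.choose i :=
          Finset.single_le_sum (fun _ _ => Nat.zero_le _) (Finset.mem_range.mpr (by omega))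
        _ = 2^n := Nat.sum_range_choose n
    · rw [Nat.choose_eq_zero_of_lt hj]; exact Nat.zero_le _
  calc ((n.choose j : ℕ) : ℝ) ≤ ((2^n : ℕ) : ℝ) := by exact_mod_cast h1
    _ = 2^n := by push_cast; ring
    _ ≤ 2^k := pow_le_pow_right₀ (by norm_num) hk

lemma holderBound (k0 : ℕ) (θ : ℝ) (hθ : 0 < θ) : ∃ C : ℝ, 0 < C ∧
    ∀ {f : ℝ → ℝ} {F P c d : ℝ}, Flat k0 θ f F P c d → ∀ x ∈ Icc c d, ∀ y ∈ Icc c d,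
      |iteratedDerivWithin k0 (fun t => Real.sqrt (f t)) (Icc c d) x
        - iteratedDerivWithin k0 (fun t => Real.sqrt (f t)) (Icc c d) y|
        ≤ C * Real.sqrt F * P^k0 * P^(θ:ℝ) * |x - y|^θ := by
  obtain ⟨B, hB1, hB⟩ := supBound k0 θ k0 le_rfl
  cases k0 with
  | zero =>
    refine ⟨3/2, by norm_num, ?_⟩
    intro f F P c d h x hx y hy
    have hsf : (0:ℝ) < Real.sqrt F := Real.sqrt_pos.mpr h.hF
    simp only [iteratedDerivWithin_zero, pow_zero, mul_one]
    have e1 : Real.sqrt (f x) * Real.sqrt (f x) = f x := Real.mul_self_sqrt (h.hfpos x hx).le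
    have e2 : Real.sqrt (f y) * Real.sqrt (f y) = f y := Real.mul_self_sqrt (h.hfpos y hy).le
    have hsum : Real.sqrt F ≤ Real.sqrt (f x) + Real.sqrt (f y) := by
      have := h.hglow x hx; have := h.hglow y hy; linarith
    have habs : |f x - f y| = |Real.sqrt (f x) - Real.sqrt (f y)| * (Real.sqrt (f x) + Real.sqrt (f y)) := by
      have hid : f x - f y = (Real.sqrt (f x) - Real.sqrt (f y)) * (Real.sqrt (f x) + Real.sqrt (f y)) := by
        linear_combination e2 - e1
      rw [hid, abs_mul, abs_of_nonneg (add_nonneg (Real.sqrt_nonneg _) (Real.sqrt_nonneg _))]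
    have hh := h.hhold 0 le_rfl x hx y hy
    simp only [iteratedDeriv_zero, pow_zero] at hh
    -- hh : |f x - f y| ≤ 3/2 * F * 1 * P^θ * |x-y|^θ
    have hkey : Real.sqrt F * |Real.sqrt (f x) - Real.sqrt (f y)|
        ≤ Real.sqrt F * (3/2 * Real.sqrt F * P^(θ:ℝ) * |x - y|^θ) := by
      have hss : Real.sqrt F * Real.sqrt F = F := Real.mul_self_sqrt h.hF.le
      calc Real.sqrt F * |Real.sqrt (f x) - Real.sqrt (f y)|
          ≤ |Real.sqrt (f x) - Real.sqrt (f y)| * (Real.sqrt (f x) + Real.sqrt (f y)) := by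
            rw [mul_comm]
            exact mul_le_mul_of_nonneg_left hsum (abs_nonneg _)
        _ = |f x - f y| := habs.symm
        _ ≤ 3/2 * F * 1 * P^(θ:ℝ) * |x - y|^θ := hh
        _ = Real.sqrt F * (3/2 * Real.sqrt F * P^(θ:ℝ) * |x - y|^θ) := by
            linear_combination (-3/2 * P^(θ:ℝ) * |x - y|^θ) * hss
    exact le_of_mul_le_mul_left hkey hsf
  | succ m =>
    set k0 := m + 1 with hk0def
    refine ⟨3/2 + k0 * 2^(k0+1) * B^2 + 2*B^2, by positivity, ?_⟩
    intro f F P c d h x hx y hy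
    have hsf : (0:ℝ) < Real.sqrt F := Real.sqrt_pos.mpr h.hF
    have hPp : (0:ℝ) < P := h.hP
    have hss : Real.sqrt F * Real.sqrt F = F := Real.mul_self_sqrt h.hF.le
    have hUD : UniqueDiffOn ℝ (Icc c d) := uniqueDiffOn_Icc h.hcd
    set g : ℝ → ℝ := fun t => Real.sqrt (f t) with hgdef
    set D : ℕ → ℝ → ℝ := fun i => iteratedDerivWithin i g (Icc c d) with hDdef
    set q : ℝ := P^(θ:ℝ) with hqdef
    have hqp : 0 < q := Real.rpow_pos_of_pos hPp θ
    set w : ℝ := |x - y|^θ with hwdef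
    have hw0 : 0 ≤ w := Real.rpow_nonneg (abs_nonneg _) θ
    -- Hölder continuity of lower-order derivatives of g
    have hPid : ∀ j : ℕ, P^(j+1) * P^((θ:ℝ)-1) = P^j * q := by
      intro j
      have h1 : P * P^((θ:ℝ)-1) = q := by
        rw [hqdef]
        have := Real.rpow_add hPp 1 (θ-1)
        rw [show (1:ℝ)+(θ-1) = θ by ring] at this
        rw [this, Real.rpow_one]
      rw [pow_succ, mul_assoc, h1]
    have hDlowHold : ∀ j, j < k0 → |D j x - D j y| ≤ B * Real.sqrt F * P^j * q * w := by
      intro j hj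
      have hdiffD : DifferentiableOn ℝ (D j) (Icc c d) :=
        h.hgsm.differentiableOn_iteratedDerivWithin (by exact_mod_cast hj) hUD
      have hbound : ∀ t ∈ Icc c d, ‖derivWithin (D j) (Icc c d) t‖ ≤ B * Real.sqrt F * P^(j+1) := by
        intro t ht
        rw [Real.norm_eq_abs]
        have e1 : derivWithin (D j) (Icc c d) t = D (j+1) t :=
          (congrFun iteratedDerivWithin_succ t).symm
        rw [e1]
        exact hB h (j+1) (by omega) t ht
      have hmvt := Convex.norm_image_sub_le_of_norm_derivWithin_le hdiffD hbound
        (convex_Icc c d) hy hx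
      rw [Real.norm_eq_abs, Real.norm_eq_abs] at hmvt
      have hcv := h.hconv x hx y hy
      calc |D j x - D j y| ≤ B * Real.sqrt F * P^(j+1) * |x - y| := hmvt
        _ ≤ B * Real.sqrt F * P^(j+1) * (P^((θ:ℝ)-1) * w) := by
            apply mul_le_mul_of_nonneg_left hcv
            exact mul_nonneg (mul_nonneg (by linarith) (Real.sqrt_nonneg _)) (pow_nonneg hPp.le _)
        _ = B * Real.sqrt F * (P^(j+1) * P^((θ:ℝ)-1)) * w := by ring
        _ = B * Real.sqrt F * P^j * q * w := by rw [hPid j]; ring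
    -- identity
    have hident : ∀ z ∈ Icc c d, 2 * (D 0 z * D k0 z)
        = iteratedDeriv k0 f z
          - ∑ i ∈ Finset.range m, ((k0.choose (i+1) : ℕ) : ℝ) * (D (i+1) z * D (m-i) z) := by
      intro z hz
      have e1 : iteratedDerivWithin k0 f (Icc c d) z = iteratedDeriv k0 f z :=
        iterDW_eq k0 le_rfl h.hsm hUD z hz
      have e2 : Set.EqOn (fun t => g t * g t) f (Icc c d) := fun t ht =>
        Real.mul_self_sqrt (h.hfpos t ht).le
      have e3 := iteratedDerivWithin_congr e2 (n := k0) hz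
      have hsum : iteratedDeriv k0 f z
          = ∑ i ∈ Finset.range (k0+1), (k0.choose i : ℝ) * (D i z * D (k0-i) z) := by
        rw [← e1, ← e3]
        exact leibniz_within hUD h.hgsm h.hgsm k0 le_rfl z hz
      rw [Finset.sum_range_succ] at hsum
      conv_rhs at hsum => rw [Finset.sum_range_succ']
      simp only [Nat.choose_self, Nat.choose_zero_right, Nat.cast_one, one_mul,
        Nat.sub_self, Nat.sub_zero, Nat.succ_sub_succ] at hsum
      have hidx : ∀ k, k0 - (k+1) = m - k := fun k => by omega
      simp only [hidx] at hsum
      linear_combination -hsum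
    -- difference of the middle sums
    have hmidd : |(∑ i ∈ Finset.range m, ((k0.choose (i+1) : ℕ) : ℝ) * (D (i+1) x * D (m-i) x))
          - ∑ i ∈ Finset.range m, ((k0.choose (i+1) : ℕ) : ℝ) * (D (i+1) y * D (m-i) y)|
        ≤ (k0 * 2^(k0+1) * B^2) * (F * P^k0 * q * w) := by
      rw [← Finset.sum_sub_distrib]
      calc |∑ i ∈ Finset.range m, (((k0.choose (i+1) : ℕ) : ℝ) * (D (i+1) x * D (m-i) x)
              - ((k0.choose (i+1) : ℕ) : ℝ) * (D (i+1) y * D (m-i) y))|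
          ≤ ∑ i ∈ Finset.range m, |((k0.choose (i+1) : ℕ) : ℝ) * (D (i+1) x * D (m-i) x)
              - ((k0.choose (i+1) : ℕ) : ℝ) * (D (i+1) y * D (m-i) y)| :=
            Finset.abs_sum_le_sum_abs _ _
        _ ≤ ∑ _i ∈ Finset.range m, (2:ℝ)^(k0+1) * B^2 * (F * P^k0 * q * w) := by
            refine Finset.sum_le_sum (fun i hi => ?_)
            have him : i < m := Finset.mem_range.mp hi
            have hs1 := hB h (i+1) (by omega) x hx
            have hs2x := hB h (m-i) (by omega) x hx
            have hs1y := hB h (i+1) (by omega) y hy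
            have hh1 := hDlowHold (i+1) (by omega)
            have hh2 := hDlowHold (m-i) (by omega)
            have hc : ((k0.choose (i+1) : ℕ) : ℝ) ≤ 2^k0 := choose_cast_le_two_pow le_rfl
            have hBpos : (0:ℝ) ≤ B := by linarith
            have hprod : |D (i+1) x * D (m-i) x - D (i+1) y * D (m-i) y|
                ≤ 2 * (B^2 * (F * P^(m+1) * q * w)) := by
              have hsplit : D (i+1) x * D (m-i) x - D (i+1) y * D (m-i) y
                  = (D (i+1) x - D (i+1) y) * D (m-i) x + D (i+1) y * (D (m-i) x - D (m-i) y) := by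
                ring
              rw [hsplit]
              have t1 : |(D (i+1) x - D (i+1) y) * D (m-i) x|
                  ≤ (B * Real.sqrt F * P^(i+1) * q * w) * (B * Real.sqrt F * P^(m-i)) := by
                rw [abs_mul]
                exact mul_le_mul hh1 hs2x (abs_nonneg _)
                  (by
                    have : (0:ℝ) ≤ B * Real.sqrt F * P^(i+1) :=
                      mul_nonneg (mul_nonneg hBpos (Real.sqrt_nonneg _)) (pow_nonneg hPp.le _)
                    positivity)
              have t2 : |D (i+1) y * (D (m-i) x - D (m-i) y)|
                  ≤ (B * Real.sqrt F * P^(i+1)) * (B * Real.sqrt F * P^(m-i) * q * w) := by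
                rw [abs_mul]
                exact mul_le_mul hs1y hh2 (abs_nonneg _)
                  (mul_nonneg (mul_nonneg hBpos (Real.sqrt_nonneg _)) (pow_nonneg hPp.le _))
              have hpp : P^(i+1) * P^(m-i) = P^(m+1) := by
                rw [← pow_add]; congr 1; omega
              have e4 : (B * Real.sqrt F * P^(i+1) * q * w) * (B * Real.sqrt F * P^(m-i))
                  = B^2 * (F * P^(m+1) * q * w) := by
                calc (B * Real.sqrt F * P^(i+1) * q * w) * (B * Real.sqrt F * P^(m-i))
                    = B^2 * ((Real.sqrt F * Real.sqrt F) * (P^(i+1) * P^(m-i)) * q * w) := by ring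
                  _ = B^2 * (F * P^(m+1) * q * w) := by rw [hss, hpp]
              have e5 : (B * Real.sqrt F * P^(i+1)) * (B * Real.sqrt F * P^(m-i) * q * w)
                  = B^2 * (F * P^(m+1) * q * w) := by
                calc (B * Real.sqrt F * P^(i+1)) * (B * Real.sqrt F * P^(m-i) * q * w)
                    = B^2 * ((Real.sqrt F * Real.sqrt F) * (P^(i+1) * P^(m-i)) * q * w) := by ring
                  _ = B^2 * (F * P^(m+1) * q * w) := by rw [hss, hpp]
              calc |(D (i+1) x - D (i+1) y) * D (m-i) x + D (i+1) y * (D (m-i) x - D (m-i) y)|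
                  ≤ |(D (i+1) x - D (i+1) y) * D (m-i) x| + |D (i+1) y * (D (m-i) x - D (m-i) y)| :=
                    abs_add_le _ _
                _ ≤ (B * Real.sqrt F * P^(i+1) * q * w) * (B * Real.sqrt F * P^(m-i))
                    + (B * Real.sqrt F * P^(i+1)) * (B * Real.sqrt F * P^(m-i) * q * w) :=
                    add_le_add t1 t2
                _ = 2 * (B^2 * (F * P^(m+1) * q * w)) := by rw [e4, e5]; ring
            calc |((k0.choose (i+1) : ℕ) : ℝ) * (D (i+1) x * D (m-i) x)
                  - ((k0.choose (i+1) : ℕ) : ℝ) * (D (i+1) y * D (m-i) y)|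
                = ((k0.choose (i+1) : ℕ) : ℝ) * |D (i+1) x * D (m-i) x - D (i+1) y * D (m-i) y| := by
                  rw [← mul_sub, abs_mul, abs_of_nonneg (Nat.cast_nonneg _)]
              _ ≤ 2^k0 * (2 * (B^2 * (F * P^(m+1) * q * w))) := by
                  apply mul_le_mul hc hprod (abs_nonneg _) (by positivity)
              _ = (2:ℝ)^(k0+1) * B^2 * (F * P^k0 * q * w) := by
                  rw [hk0def, pow_succ]
                  ring
        _ = (m:ℝ) * ((2:ℝ)^(k0+1) * B^2 * (F * P^k0 * q * w)) := by
            rw [Finset.sum_const, Finset.card_range, nsmul_eq_mul]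
        _ ≤ (k0 * 2^(k0+1) * B^2) * (F * P^k0 * q * w) := by
            have hmk0 : (m:ℝ) ≤ k0 := by exact_mod_cast (by omega : m ≤ k0)
            have hX : (0:ℝ) ≤ (2:ℝ)^(k0+1) * B^2 * (F * P^k0 * q * w) :=
              mul_nonneg (mul_nonneg (by positivity) (sq_nonneg _))
                (mul_nonneg (mul_nonneg (mul_nonneg h.hF.le (pow_nonneg hPp.le _)) hqp.le) hw0)
            nlinarith
    -- f part
    have hfp := h.hhold k0 le_rfl x hx y hy
    -- D0 bounds
    have hg0x : Real.sqrt F / 2 ≤ D 0 x := by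
      have e : D 0 x = g x := by rw [hDdef]; simp
      rw [e]; exact h.hglow x hx
    have hD0hold := hDlowHold 0 (by omega)
    have hDky : |D k0 y| ≤ B * Real.sqrt F * P^k0 := hB h k0 le_rfl y hy
    -- main chain
    have hchain : Real.sqrt F * |D k0 x - D k0 y|
        ≤ (3/2 + k0 * 2^(k0+1) * B^2 + 2*B^2) * (F * P^k0 * q * w) := by
      have hidx := hident x hx
      have hidy := hident y hy
      calc Real.sqrt F * |D k0 x - D k0 y|
          ≤ (2 * D 0 x) * |D k0 x - D k0 y| := by
            apply mul_le_mul_of_nonneg_right (by linarith) (abs_nonneg _)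
        _ = |2 * (D 0 x * (D k0 x - D k0 y))| := by
            rw [abs_mul, abs_mul, abs_of_nonneg (by linarith : (0:ℝ) ≤ D 0 x),
              abs_of_nonneg (by norm_num : (0:ℝ) ≤ (2:ℝ))]
            ring
        _ = |(iteratedDeriv k0 f x - iteratedDeriv k0 f y)
              - ((∑ i ∈ Finset.range m, ((k0.choose (i+1) : ℕ) : ℝ) * (D (i+1) x * D (m-i) x))
                - ∑ i ∈ Finset.range m, ((k0.choose (i+1) : ℕ) : ℝ) * (D (i+1) y * D (m-i) y))
              + 2 * D k0 y * (D 0 y - D 0 x)| := by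
            congr 1
            linear_combination hidx - hidy
        _ ≤ |iteratedDeriv k0 f x - iteratedDeriv k0 f y|
              + |(∑ i ∈ Finset.range m, ((k0.choose (i+1) : ℕ) : ℝ) * (D (i+1) x * D (m-i) x))
                - ∑ i ∈ Finset.range m, ((k0.choose (i+1) : ℕ) : ℝ) * (D (i+1) y * D (m-i) y)|
              + 2 * |D k0 y| * |D 0 x - D 0 y| := by
            have step1 := abs_add_le ((iteratedDeriv k0 f x - iteratedDeriv k0 f y)
              - ((∑ i ∈ Finset.range m, ((k0.choose (i+1) : ℕ) : ℝ) * (D (i+1) x * D (m-i) x))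
                - ∑ i ∈ Finset.range m, ((k0.choose (i+1) : ℕ) : ℝ) * (D (i+1) y * D (m-i) y)))
              (2 * D k0 y * (D 0 y - D 0 x))
            have step2 := abs_sub (iteratedDeriv k0 f x - iteratedDeriv k0 f y)
              ((∑ i ∈ Finset.range m, ((k0.choose (i+1) : ℕ) : ℝ) * (D (i+1) x * D (m-i) x))
                - ∑ i ∈ Finset.range m, ((k0.choose (i+1) : ℕ) : ℝ) * (D (i+1) y * D (m-i) y))
            have step3 : |2 * D k0 y * (D 0 y - D 0 x)| = 2 * |D k0 y| * |D 0 x - D 0 y| := by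
              rw [abs_mul, abs_mul, abs_of_nonneg (by norm_num : (0:ℝ) ≤ (2:ℝ)), abs_sub_comm]
            linarith
        _ ≤ (3/2 * (F * P^k0 * q * w))
              + (k0 * 2^(k0+1) * B^2) * (F * P^k0 * q * w)
              + 2 * (B * Real.sqrt F * P^k0) * (B * Real.sqrt F * q * w) := by
            have hfp' : |iteratedDeriv k0 f x - iteratedDeriv k0 f y| ≤ 3/2 * (F * P^k0 * q * w) := by
              calc |iteratedDeriv k0 f x - iteratedDeriv k0 f y|
                  ≤ 3/2 * F * P^k0 * P^(θ:ℝ) * |x - y|^θ := hfp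
                _ = 3/2 * (F * P^k0 * q * w) := by rw [← hqdef, ← hwdef]; ring
            have ht3 : 2 * |D k0 y| * |D 0 x - D 0 y|
                ≤ 2 * (B * Real.sqrt F * P^k0) * (B * Real.sqrt F * q * w) := by
              have h1 : |D 0 x - D 0 y| ≤ B * Real.sqrt F * q * w := by
                have := hD0hold
                calc |D 0 x - D 0 y| ≤ B * Real.sqrt F * P^(0:ℕ) * q * w := this
                  _ = B * Real.sqrt F * q * w := by rw [pow_zero]; ring
              have h2 : (0:ℝ) ≤ B * Real.sqrt F * P^k0 :=
                mul_nonneg (mul_nonneg (by linarith) (Real.sqrt_nonneg _)) (pow_nonneg hPp.le _)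
              calc 2 * |D k0 y| * |D 0 x - D 0 y|
                  ≤ 2 * (B * Real.sqrt F * P^k0) * |D 0 x - D 0 y| := by
                    apply mul_le_mul_of_nonneg_right ?_ (abs_nonneg _)
                    linarith [hDky]
                _ ≤ 2 * (B * Real.sqrt F * P^k0) * (B * Real.sqrt F * q * w) := by
                    apply mul_le_mul_of_nonneg_left h1 (by linarith [h2])
            linarith [hmidd]
        _ = (3/2 + k0 * 2^(k0+1) * B^2 + 2*B^2) * (F * P^k0 * q * w) := by
            calc (3/2 * (F * P^k0 * q * w))
              + (k0 * 2^(k0+1) * B^2) * (F * P^k0 * q * w)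
              + 2 * (B * Real.sqrt F * P^k0) * (B * Real.sqrt F * q * w)
                = (3/2 + k0 * 2^(k0+1) * B^2) * (F * P^k0 * q * w)
                  + 2*B^2 * ((Real.sqrt F * Real.sqrt F) * P^k0 * q * w) := by ring
              _ = (3/2 + k0 * 2^(k0+1) * B^2 + 2*B^2) * (F * P^k0 * q * w) := by rw [hss]; ring
    -- divide by sqrt F
    have hexp : (3/2 + k0 * 2^(k0+1) * B^2 + 2*B^2) * (F * P^k0 * q * w)
        = Real.sqrt F * ((3/2 + k0 * 2^(k0+1) * B^2 + 2*B^2) * Real.sqrt F * P^k0 * q * w) := by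
      linear_combination (-(3/2 + (k0:ℝ) * 2^(k0+1) * B^2 + 2*B^2) * P^k0 * q * w) * hss
    rw [hexp] at hchain
    have := le_of_mul_le_mul_left hchain hsf
    calc |iteratedDerivWithin k0 g (Icc c d) x - iteratedDerivWithin k0 g (Icc c d) y|
        ≤ (3/2 + k0 * 2^(k0+1) * B^2 + 2*B^2) * Real.sqrt F * P^k0 * q * w := this
      _ = (3/2 + ↑k0 * 2^(k0+1) * B^2 + 2*B^2) * Real.sqrt F * P^k0 * P^(θ:ℝ) * |x - y|^θ := by
          rw [hqdef, hwdef]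


set_option maxHeartbeats 2000000 in
theorem stmt_16 (β : ℝ) (hβ : 0 < β) (k0 : ℕ) (hk0 : (k0 : ℝ) < β) (hk0' : β ≤ k0 + 1) :
    ∃ C : ℝ, 0 < C ∧
      ∀ (f : ℝ → ℝ) (R : ℝ), 0 < R →
      ContDiff ℝ k0 f →
      (∀ x ∈ Icc (0:ℝ) 1, 0 ≤ f x) →
      (∀ j : ℕ, 1 ≤ j → j ≤ k0 → ∀ x ∈ Icc (0:ℝ) 1,
        |iteratedDeriv j f x| ≤ R ^ ((j : ℝ) / β) * f x ^ ((β - j) / β)) →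
      (∀ x ∈ Icc (0:ℝ) 1, ∀ y ∈ Icc (0:ℝ) 1,
        |iteratedDeriv k0 f x - iteratedDeriv k0 f y| ≤ R * |x - y| ^ (β - k0)) →
      ∀ a : ℝ, 0 < a → (Real.exp a - 1) + a ^ β / (Nat.factorial k0) ≤ 1 / 2 →
      ∀ x₀ ∈ Icc (0:ℝ) 1, 0 < f x₀ →
      ∀ c d : ℝ, c ≤ d → Icc c d ⊆ Icc (0:ℝ) 1 → x₀ ∈ Icc c d →
      d - c ≤ a * (f x₀ / R) ^ (1 / β) →
      (∀ x ∈ Icc c d, f x₀ / 2 ≤ f x) ∧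
      ContDiffOn ℝ k0 (fun t => Real.sqrt (f t)) (Icc c d) ∧
      ∀ x ∈ Icc c d, ∀ y ∈ Icc c d,
        |iteratedDerivWithin k0 (fun t => Real.sqrt (f t)) (Icc c d) x -
          iteratedDerivWithin k0 (fun t => Real.sqrt (f t)) (Icc c d) y|
          ≤ C * R / Real.sqrt (f x₀) * |x - y| ^ (β - k0) := by
  set θ : ℝ := β - k0 with hθdef
  have hθ0 : 0 < θ := by simp [hθdef]; linarith
  have hθ1 : θ ≤ 1 := by simp [hθdef]; linarith
  obtain ⟨C, hC0, hC⟩ := holderBound k0 θ hθ0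
  refine ⟨C, hC0, ?_⟩
  intro f R hR hsm hnn hflat hhold a ha ha2 x₀ hx₀ hfx₀ c d hcd hsub hx₀cd hlen
  set F : ℝ := f x₀ with hFdef
  have hFpos : 0 < F := hfx₀
  have hFR : 0 < F / R := div_pos hFpos hR
  set ρ : ℝ := (F / R) ^ (1 / β) with hρdef
  have hρ : 0 < ρ := Real.rpow_pos_of_pos hFR _
  set P : ℝ := ρ⁻¹ with hPdef
  have hP : 0 < P := inv_pos.mpr hρ
  have hPρ : P * ρ = 1 := inv_mul_cancel₀ (ne_of_gt hρ)
  have hβne : β ≠ 0 := ne_of_gt hβ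
  have hρβ : ρ ^ β = F / R := by
    rw [hρdef, ← Real.rpow_mul hFR.le, one_div_mul_cancel hβne, Real.rpow_one]
  have ha1 : a ≤ 1 := by
    have h1 := Real.add_one_le_exp a
    have h2 : 0 ≤ a ^ β / (Nat.factorial k0) := by
      apply div_nonneg (Real.rpow_nonneg ha.le β) (Nat.cast_nonneg _)
    linarith
  have hlen2 : d - c ≤ a * ρ := hlen
  have hlenρ : d - c ≤ ρ := by nlinarith
  -- key rpow identity
  have hRF : ∀ j : ℕ, R ^ ((j : ℝ) / β) * F ^ ((β - j) / β) = F * P ^ j := by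
    intro j
    have hρj : (ρ : ℝ) ^ (j : ℕ) = (F / R) ^ ((j : ℝ) / β) := by
      rw [← Real.rpow_natCast ρ j, hρdef, ← Real.rpow_mul hFR.le]
      congr 1
      field_simp
    have h1 : P ^ (j : ℕ) = (R/F) ^ ((j:ℝ)/β) := by
      rw [hPdef, inv_pow, hρj, ← Real.inv_rpow hFR.le, inv_div]
    have h3 : ((R/F):ℝ) ^ ((j:ℝ)/β) = R ^ ((j:ℝ)/β) / F ^ ((j:ℝ)/β) :=
      Real.div_rpow hR.le hFpos.le _
    have h4 : F ^ ((β - (j:ℝ))/β) = F / F ^ ((j:ℝ)/β) := by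
      rw [show (β - (j:ℝ))/β = 1 - (j:ℝ)/β by field_simp]
      rw [Real.rpow_sub hFpos, Real.rpow_one]
    rw [h1, h3, h4]
    ring
  have hFPβ : F * (P ^ k0 * P ^ (θ:ℝ)) = R := by
    have h1 : (P:ℝ) ^ (k0:ℕ) * P ^ (θ:ℝ) = P ^ (β:ℝ) := by
      rw [← Real.rpow_natCast P k0, ← Real.rpow_add hP]
      congr 1
      rw [hθdef]; ring
    have h2 : P ^ (β:ℝ) = R / F := by
      rw [hPdef, ← Real.rpow_neg_one ρ, ← Real.rpow_mul hρ.le]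
      rw [show (-1) * β = -β by ring, Real.rpow_neg hρ.le, hρβ]
      rw [inv_div]
    rw [h1, h2, mul_div_cancel₀ _ (ne_of_gt hFpos)]
  have hsubmem : ∀ x ∈ Icc c d, x ∈ Icc (0:ℝ) 1 := fun x hx => hsub hx
  have habsle : ∀ x ∈ Icc c d, ∀ y ∈ Icc c d, |x - y| ≤ d - c := by
    intro x hx y hy
    rw [abs_le]
    constructor <;> [linarith [hx.1, hy.2]; linarith [hx.2, hy.1]]
  -- Part 1: fluctuation control
  have hfluct : ∀ x ∈ Icc c d, |f x - F| ≤ F / 2 := by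
    intro x hx
    have hTT := taylor_flat (k0 := k0) hθ0 hsm hx₀cd hR.le
      (fun t ht => hhold t (hsubmem t ht) x₀ hx₀) x hx
    have hxd : |x - x₀| ≤ a * ρ := le_trans (habsle x hx x₀ hx₀cd) hlen2
    have hxd0 : 0 ≤ |x - x₀| := abs_nonneg _
    -- remainder bound
    have hrem : R * |x - x₀| ^ (θ + k0) / (k0.factorial : ℝ) ≤ a ^ β * F / (k0.factorial : ℝ) := by
      have hθk : θ + (k0:ℝ) = β := by rw [hθdef]; ring
      rw [hθk]
      have hnum : R * |x - x₀| ^ (β:ℝ) ≤ a ^ β * F := by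
        calc R * |x - x₀| ^ (β:ℝ) ≤ R * (a*ρ)^(β:ℝ) := by
              apply mul_le_mul_of_nonneg_left (Real.rpow_le_rpow hxd0 hxd hβ.le) hR.le
          _ = R * (a^(β:ℝ) * (F/R)) := by rw [Real.mul_rpow ha.le hρ.le, hρβ]
          _ = a^β * F := by field_simp
      have hfac : (0:ℝ) < (k0.factorial : ℝ) := by exact_mod_cast Nat.factorial_pos k0
      exact (div_le_div_iff_of_pos_right hfac).mpr hnum
    -- polynomial part
    have hpolysplit : (∑ j ∈ Finset.range (k0+1),
        iteratedDeriv j f x₀ * (x - x₀)^j / (j.factorial : ℝ))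
        = (∑ j ∈ Finset.range k0,
            iteratedDeriv (j+1) f x₀ * (x - x₀)^(j+1) / ((j+1).factorial : ℝ)) + F := by
      rw [Finset.sum_range_succ']
      congr 1
      simp [hFdef]
    have hterm : ∀ j ∈ Finset.range k0,
        |iteratedDeriv (j+1) f x₀ * (x - x₀)^(j+1) / ((j+1).factorial : ℝ)|
          ≤ F * a^(j+1) / ((j+1).factorial : ℝ) := by
      intro j hj
      have hjk : j + 1 ≤ k0 := by have := Finset.mem_range.mp hj; omega
      have h1 := hflat (j+1) (by omega) hjk x₀ hx₀
      have h1' : |iteratedDeriv (j+1) f x₀| ≤ F * P^(j+1) := by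
        rw [← hRF (j+1)]
        exact h1
      have h2 : |(x - x₀)^(j+1)| ≤ (a*ρ)^(j+1) := by
        rw [abs_pow]
        exact pow_le_pow_left₀ hxd0 hxd (j+1)
      have h3 : F * P^(j+1) * (a*ρ)^(j+1) = F * a^(j+1) := by
        have : P^(j+1) * (a*ρ)^(j+1) = a^(j+1) := by
          rw [← mul_pow]
          congr 1
          calc P * (a * ρ) = a * (P * ρ) := by ring
            _ = a := by rw [hPρ, mul_one]
        calc F * P^(j+1) * (a*ρ)^(j+1) = F * (P^(j+1) * (a*ρ)^(j+1)) := by ring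
          _ = F * a^(j+1) := by rw [this]
      have hfacp : (0:ℝ) < ((j+1).factorial : ℝ) := by exact_mod_cast Nat.factorial_pos (j+1)
      rw [abs_div, abs_of_nonneg hfacp.le]
      rw [div_le_div_iff_of_pos_right hfacp]
      calc |iteratedDeriv (j+1) f x₀ * (x - x₀)^(j+1)|
          = |iteratedDeriv (j+1) f x₀| * |(x - x₀)^(j+1)| := abs_mul _ _
        _ ≤ (F * P^(j+1)) * ((a*ρ)^(j+1)) := by
            apply mul_le_mul h1' h2 (abs_nonneg _)
            exact mul_nonneg hFpos.le (pow_nonneg hP.le _)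
        _ = F * a^(j+1) := by rw [← h3]
    have hexpsum : ∑ j ∈ Finset.range k0, a^(j+1) / ((j+1).factorial : ℝ) ≤ Real.exp a - 1 := by
      have h1 := Real.sum_le_exp_of_nonneg ha.le (k0+1)
      rw [Finset.sum_range_succ'] at h1
      simp only [pow_zero, Nat.factorial_zero, Nat.cast_one, div_one] at h1
      linarith
    have hpoly : |(∑ j ∈ Finset.range (k0+1),
        iteratedDeriv j f x₀ * (x - x₀)^j / (j.factorial : ℝ)) - F| ≤ (Real.exp a - 1) * F := by
      rw [hpolysplit, add_sub_cancel_right]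
      calc |∑ j ∈ Finset.range k0, iteratedDeriv (j+1) f x₀ * (x - x₀)^(j+1) / ((j+1).factorial : ℝ)|
          ≤ ∑ j ∈ Finset.range k0,
              |iteratedDeriv (j+1) f x₀ * (x - x₀)^(j+1) / ((j+1).factorial : ℝ)| :=
            Finset.abs_sum_le_sum_abs _ _
        _ ≤ ∑ j ∈ Finset.range k0, F * a^(j+1) / ((j+1).factorial : ℝ) :=
            Finset.sum_le_sum hterm
        _ = F * ∑ j ∈ Finset.range k0, a^(j+1) / ((j+1).factorial : ℝ) := by
            rw [Finset.mul_sum]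
            refine Finset.sum_congr rfl (fun j _ => by ring)
        _ ≤ F * (Real.exp a - 1) := by
            apply mul_le_mul_of_nonneg_left hexpsum hFpos.le
        _ = (Real.exp a - 1) * F := by ring
    have hcomb := abs_sub_abs_le_abs_sub (f x - F) 0
    calc |f x - F| ≤ |f x - ∑ j ∈ Finset.range (k0+1),
            iteratedDeriv j f x₀ * (x - x₀)^j / (j.factorial : ℝ)|
          + |(∑ j ∈ Finset.range (k0+1),
            iteratedDeriv j f x₀ * (x - x₀)^j / (j.factorial : ℝ)) - F| := by
          have := abs_sub_le (f x)
            (∑ j ∈ Finset.range (k0+1), iteratedDeriv j f x₀ * (x - x₀)^j / (j.factorial : ℝ)) F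
          exact this
      _ ≤ a ^ β * F / (k0.factorial : ℝ) + (Real.exp a - 1) * F := by
          have := le_trans hTT hrem
          linarith [hpoly]
      _ ≤ F / 2 := by
          have h1 : a ^ β * F / (k0.factorial : ℝ) + (Real.exp a - 1) * F
              = ((Real.exp a - 1) + a^β / (k0.factorial : ℝ)) * F := by ring
          rw [h1]
          nlinarith [ha2, hFpos]
  have hlow' : ∀ x ∈ Icc c d, F / 2 ≤ f x := by
    intro x hx
    have := abs_le.mp (hfluct x hx)
    linarith [this.1]
  have hup' : ∀ x ∈ Icc c d, f x ≤ 3/2 * F := by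
    intro x hx
    have := abs_le.mp (hfluct x hx)
    linarith [this.2]
  have hsf : (0:ℝ) < Real.sqrt F := Real.sqrt_pos.mpr hFpos
  have hss : Real.sqrt F * Real.sqrt F = F := Real.mul_self_sqrt hFpos.le
  have hgcd : ContDiffOn ℝ k0 (fun t => Real.sqrt (f t)) (Icc c d) :=
    (hsm.contDiffOn).sqrt (fun x hx =>
      ne_of_gt (lt_of_lt_of_le (by linarith : (0:ℝ) < F/2) (hlow' x hx)))
  rcases eq_or_lt_of_le hcd with heq | hlt
  · -- degenerate interval
    refine ⟨hlow', hgcd, ?_⟩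
    intro x hx y hy
    subst heq
    have hxc : x = c := le_antisymm hx.2 hx.1
    have hyc : y = c := le_antisymm hy.2 hy.1
    subst hxc; subst hyc
    rw [sub_self, abs_zero, sub_self, abs_zero, Real.zero_rpow (ne_of_gt hθ0), mul_zero]
  · -- main case : build Flat
    have hder : ∀ j, j ≤ k0 → ∀ x ∈ Icc c d, |iteratedDeriv j f x| ≤ 3/2 * F * P^j := by
      intro j hj x hx
      rcases Nat.eq_zero_or_pos j with rfl | hj1
      · simp only [iteratedDeriv_zero, pow_zero, mul_one]
        rw [abs_of_nonneg (hnn x (hsubmem x hx))]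
        linarith [hup' x hx]
      · have h1 := hflat j hj1 hj x (hsubmem x hx)
        have hjβ : (j:ℝ) ≤ β := by
          have : (j:ℝ) ≤ k0 := by exact_mod_cast hj
          linarith
        have hβj : 0 ≤ (β - j)/β := div_nonneg (by linarith) hβ.le
        have hβj1 : (β - j)/β ≤ 1 := by
          rw [div_le_one hβ]
          have : (0:ℝ) ≤ j := Nat.cast_nonneg j
          linarith
        have h2 : f x ^ ((β-j)/β) ≤ (3/2 * F) ^ ((β-j)/β) :=
          Real.rpow_le_rpow (hnn x (hsubmem x hx)) (hup' x hx) hβj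
        have h3 : ((3/2 * F):ℝ) ^ ((β-j)/β) = (3/2:ℝ)^((β-j)/β) * F^((β-j)/β) :=
          Real.mul_rpow (by norm_num) hFpos.le
        have h4 : (3/2:ℝ)^((β-j)/β) ≤ 3/2 := by
          calc (3/2:ℝ)^((β-j)/β) ≤ (3/2:ℝ)^(1:ℝ) :=
              Real.rpow_le_rpow_of_exponent_le (by norm_num) hβj1
            _ = 3/2 := Real.rpow_one _
        calc |iteratedDeriv j f x| ≤ R^((j:ℝ)/β) * f x ^ ((β-j)/β) := h1
          _ ≤ R^((j:ℝ)/β) * ((3/2:ℝ)^((β-j)/β) * F^((β-j)/β)) := by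
              rw [← h3]
              exact mul_le_mul_of_nonneg_left h2 (Real.rpow_nonneg hR.le _)
          _ ≤ R^((j:ℝ)/β) * ((3/2:ℝ) * F^((β-j)/β)) := by
              apply mul_le_mul_of_nonneg_left ?_ (Real.rpow_nonneg hR.le _)
              exact mul_le_mul_of_nonneg_right h4 (Real.rpow_nonneg hFpos.le _)
          _ = 3/2 * (R^((j:ℝ)/β) * F^((β-j)/β)) := by ring
          _ = 3/2 * F * P^j := by rw [hRF j]; ring
    have hconv : ∀ x ∈ Icc c d, ∀ y ∈ Icc c d, |x - y| ≤ P^((θ:ℝ)-1) * |x - y|^θ := by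
      intro x hx y hy
      rcases eq_or_ne x y with rfl | hne
      · rw [sub_self, abs_zero, Real.zero_rpow (ne_of_gt hθ0), mul_zero]
      · have hδ : 0 < |x - y| := abs_pos.mpr (sub_ne_zero.mpr hne)
        have hδρ : |x - y| ≤ ρ := le_trans (habsle x hx y hy) hlenρ
        have h1 : |x - y| = |x - y|^(θ:ℝ) * |x - y|^(1-θ:ℝ) := by
          rw [← Real.rpow_add hδ, show θ + (1-θ) = 1 by ring, Real.rpow_one]
        have h2 : |x - y|^(1-θ:ℝ) ≤ ρ^(1-θ:ℝ) := Real.rpow_le_rpow hδ.le hδρ (by linarith)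
        have h3 : ρ^(1-θ:ℝ) = P^((θ:ℝ)-1) := by
          rw [hPdef, Real.inv_rpow hρ.le, ← Real.rpow_neg hρ.le]
          congr 1
          ring
        calc |x - y| = |x - y|^(θ:ℝ) * |x - y|^(1-θ:ℝ) := h1
          _ ≤ |x - y|^(θ:ℝ) * ρ^(1-θ:ℝ) :=
              mul_le_mul_of_nonneg_left h2 (Real.rpow_nonneg (abs_nonneg _) _)
          _ = P^((θ:ℝ)-1) * |x - y|^θ := by rw [h3]; ring
    have hPid : ∀ j : ℕ, P^(j+1) * P^((θ:ℝ)-1) = P^j * P^(θ:ℝ) := by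
      intro j
      have h1 : P * P^((θ:ℝ)-1) = P^(θ:ℝ) := by
        have h2 := Real.rpow_add hP 1 (θ-1)
        rw [show (1:ℝ)+(θ-1) = θ by ring] at h2
        rw [h2, Real.rpow_one]
      rw [pow_succ, mul_assoc, h1]
    have hhold' : ∀ j, j ≤ k0 → ∀ x ∈ Icc c d, ∀ y ∈ Icc c d,
        |iteratedDeriv j f x - iteratedDeriv j f y|
          ≤ 3/2 * F * P^j * P^(θ:ℝ) * |x - y|^θ := by
      intro j hj x hx y hy
      rcases Nat.lt_or_ge j k0 with hjk | hjk
      · -- MVT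
        have hdiff : ∀ t ∈ Icc c d, DifferentiableAt ℝ (iteratedDeriv j f) t := fun t _ =>
          (hsm.differentiable_iteratedDeriv j (by exact_mod_cast hjk)).differentiableAt
        have hbound : ∀ t ∈ Icc c d, ‖deriv (iteratedDeriv j f) t‖ ≤ 3/2 * F * P^(j+1) := by
          intro t ht
          rw [Real.norm_eq_abs, ← iteratedDeriv_succ]
          exact hder (j+1) (by omega) t ht
        have hmvt := Convex.norm_image_sub_le_of_norm_deriv_le hdiff hbound
          (convex_Icc c d) hy hx
        rw [Real.norm_eq_abs, Real.norm_eq_abs] at hmvt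
        have hcv := hconv x hx y hy
        calc |iteratedDeriv j f x - iteratedDeriv j f y| ≤ 3/2 * F * P^(j+1) * |x - y| := hmvt
          _ ≤ 3/2 * F * P^(j+1) * (P^((θ:ℝ)-1) * |x - y|^θ) := by
              apply mul_le_mul_of_nonneg_left hcv
              exact mul_nonneg (mul_nonneg (by norm_num) hFpos.le) (pow_nonneg hP.le _)
          _ = 3/2 * F * (P^(j+1) * P^((θ:ℝ)-1)) * |x - y|^θ := by ring
          _ = 3/2 * F * P^j * P^(θ:ℝ) * |x - y|^θ := by rw [hPid j]; ring
      · have hjeq : j = k0 := le_antisymm hj hjk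
        subst hjeq
        have h1 := hhold x (hsubmem x hx) y (hsubmem y hy)
        have h2 : R * |x - y|^θ ≤ 3/2 * F * P^j * P^(θ:ℝ) * |x - y|^θ := by
          have hq : (0:ℝ) < P^(θ:ℝ) := Real.rpow_pos_of_pos hP _
          have hw : (0:ℝ) ≤ |x - y|^θ := Real.rpow_nonneg (abs_nonneg _) _
          have hRid : R = F * (P^j * P^(θ:ℝ)) := hFPβ.symm
          rw [hRid]
          have hterm : (0:ℝ) ≤ F * (P^j * P^(θ:ℝ)) * |x - y|^θ :=
            mul_nonneg (mul_nonneg hFpos.le (mul_nonneg (pow_nonneg hP.le _) hq.le)) hw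
          nlinarith
        exact le_trans h1 h2
    have hFlat : Flat k0 θ f F P c d :=
      ⟨hlt, hFpos, hP, hsm, hlow', hup', hder, hhold', hconv⟩
    refine ⟨hlow', hgcd, ?_⟩
    intro x hx y hy
    have hmain := hC hFlat x hx y hy
    have hconst : C * Real.sqrt F * P^k0 * P^(θ:ℝ) * |x - y|^θ
        = C * R / Real.sqrt F * |x - y|^θ := by
      have h1 : Real.sqrt F * P^k0 * P^(θ:ℝ) = R / Real.sqrt F := by
        rw [eq_div_iff (ne_of_gt hsf)]
        linear_combination (P^k0 * P^(θ:ℝ)) * hss + hFPβ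
      calc C * Real.sqrt F * P^k0 * P^(θ:ℝ) * |x - y|^θ
          = C * (Real.sqrt F * P^k0 * P^(θ:ℝ)) * |x - y|^θ := by ring
        _ = C * (R / Real.sqrt F) * |x - y|^θ := by rw [h1]
        _ = C * R / Real.sqrt F * |x - y|^θ := by ring
    rw [← hconst]
    exact hmain
end

section
/- Suppose g, ĝ ≥ 0 satisfy |ĝ - g| ≤ C·r(g) where r(u) = L^{β/(β+1)} ∨ (uL)^{β/(2β+1)}, L ∈ (0,1), β > 0, C ≥ 1. Then there is a constant C̄ = C̄(β, C) (independent of g, ĝ, L) such that C̄^{-1} r(ĝ) ≤ r(g) ≤ C̄ r(ĝ). -/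
open Real

noncomputable def rateP (β L u : ℝ) : ℝ :=
  max (L ^ (β / (β + 1))) ((u * L) ^ (β / (2 * β + 1)))

lemma my_rpow_add_le {a b q : ℝ} (ha : 0 ≤ a) (hb : 0 ≤ b) (hq0 : 0 ≤ q) (hq1 : q ≤ 1) :
    (a + b) ^ q ≤ a ^ q + b ^ q := by
  have h := NNReal.rpow_add_le_add_rpow a.toNNReal b.toNNReal hq0 hq1
  have h2 := (NNReal.coe_le_coe).2 h
  push_cast [NNReal.coe_rpow] at h2
  rwa [Real.coe_toNNReal a ha, Real.coe_toNNReal b hb] at h2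

set_option maxHeartbeats 1000000 in
theorem stmt_19 (β C : ℝ) (hβ : 0 < β) (hC : 1 ≤ C) :
    ∃ Cbar : ℝ, 0 < Cbar ∧ ∀ L g ghat : ℝ, 0 < L → L < 1 → 0 ≤ g → 0 ≤ ghat →
      |ghat - g| ≤ C * rateP β L g →
      Cbar⁻¹ * rateP β L ghat ≤ rateP β L g ∧ rateP β L g ≤ Cbar * rateP β L ghat := by
  refine ⟨8 * C ^ 2 + 2, by positivity, ?_⟩
  intro L g ghat hL hL1 hg hghat hbound
  set p := β / (β + 1) with hp_def
  set q := β / (2 * β + 1) with hq_def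
  have hb1 : (0:ℝ) < β + 1 := by linarith
  have hb2 : (0:ℝ) < 2 * β + 1 := by linarith
  have hq0 : 0 < q := div_pos hβ hb2
  have hq1 : q < 1 := by rw [hq_def, div_lt_one hb2]; linarith
  have hp0 : 0 < p := div_pos hβ hb1
  have hp1 : p ≤ 1 := by rw [hp_def, div_le_one hb1]; linarith
  have hpq : p * (1 - q) = q := by
    rw [hp_def, hq_def]; field_simp; ring
  have hqp : (p + 1) * q = p := by
    rw [hp_def, hq_def]; field_simp; ring
  have hA0 : 0 < L ^ p := rpow_pos_of_pos hL p
  -- basic: L^(p+1) ^ q = L^p etc.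
  have hmulL : L ^ p * L = L ^ (p + 1) := by
    rw [Real.rpow_add hL, Real.rpow_one]
  have hLp1 : (L ^ p * L) ^ q = L ^ p := by
    rw [hmulL, ← Real.rpow_mul hL.le, hqp]
  have hq1' : (0:ℝ) < 1 - q := by linarith
  have hrg_ge : L ^ p ≤ rateP β L g := le_max_left _ _
  have hrg0 : 0 < rateP β L g := lt_of_lt_of_le hA0 hrg_ge
  have hrgh_ge : L ^ p ≤ rateP β L ghat := le_max_left _ _
  have hrgh0 : 0 < rateP β L ghat := lt_of_lt_of_le hA0 hrgh_ge
  -- (r*L)^q ≤ r whenever L^p ≤ r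
  have F2 : ∀ r : ℝ, L ^ p ≤ r → (r * L) ^ q ≤ r := by
    intro r hr
    have hr0 : 0 < r := lt_of_lt_of_le hA0 hr
    have h2 : L ^ q = (L ^ p) ^ (1 - q) := by
      rw [← Real.rpow_mul hL.le, hpq]
    have h3 : (L ^ p) ^ (1 - q) ≤ r ^ (1 - q) :=
      Real.rpow_le_rpow hA0.le hr hq1'.le
    have hsum : q + (1 - q) = 1 := by ring
    calc (r * L) ^ q = r ^ q * L ^ q := Real.mul_rpow hr0.le hL.le
      _ ≤ r ^ q * r ^ (1 - q) := by
          apply mul_le_mul_of_nonneg_left (h2 ▸ h3) (Real.rpow_nonneg hr0.le q)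
      _ = r := by rw [← Real.rpow_add hr0, hsum, Real.rpow_one]
  have h2C0 : (0:ℝ) < 2 * C := by linarith
  have hC2 : (1:ℝ) ≤ 2 * C := by linarith
  have hinvq : (1 / (1 - q)) * q = p := by
    rw [div_mul_eq_mul_div, div_eq_iff hq1'.ne']
    linarith [hpq]
  set T := (2 * C) ^ ((1:ℝ) / (1 - q)) * L ^ p with hT_def
  have hT0 : 0 < T := by positivity
  have F1 : (g * L) ^ q ≤ max (g / (2 * C)) (2 * C * L ^ p) := by
    rcases le_or_gt g T with h | h
    · refine le_trans ?_ (le_max_right _ _)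
      have hTq : (T * L) ^ q = (2 * C) ^ p * L ^ p := by
        rw [hT_def, mul_assoc, hmulL,
          Real.mul_rpow (by positivity) (by positivity),
          ← Real.rpow_mul h2C0.le, ← Real.rpow_mul hL.le, hinvq, hqp]
      calc (g * L) ^ q ≤ (T * L) ^ q :=
            Real.rpow_le_rpow (by positivity)
              (mul_le_mul_of_nonneg_right h hL.le) hq0.le
        _ = (2 * C) ^ p * L ^ p := hTq
        _ ≤ 2 * C * L ^ p := by
            have h5 : (2 * C) ^ p ≤ (2 * C) ^ (1:ℝ) :=
              Real.rpow_le_rpow_of_exponent_le hC2 hp1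
            rw [Real.rpow_one] at h5
            exact mul_le_mul_of_nonneg_right h5 hA0.le
    · refine le_trans ?_ (le_max_left _ _)
      have hg0 : 0 < g := lt_trans hT0 h
      have hT1q : T ^ (1 - q) = 2 * C * L ^ q := by
        rw [hT_def, Real.mul_rpow (by positivity) hA0.le,
          ← Real.rpow_mul h2C0.le, ← Real.rpow_mul hL.le,
          one_div_mul_cancel hq1'.ne', Real.rpow_one, hpq]
      have hTg : T ^ (1 - q) ≤ g ^ (1 - q) :=
        Real.rpow_le_rpow hT0.le h.le hq1'.le
      have key : 2 * C * L ^ q ≤ g ^ (1 - q) := hT1q ▸ hTg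
      have hsum : q + (1 - q) = 1 := by ring
      calc (g * L) ^ q = g ^ q * L ^ q := Real.mul_rpow hg0.le hL.le
        _ ≤ g ^ q * (g ^ (1 - q) / (2 * C)) := by
            apply mul_le_mul_of_nonneg_left _ (Real.rpow_nonneg hg0.le q)
            rw [le_div_iff₀ h2C0]; linarith [key]
        _ = g / (2 * C) := by
            rw [mul_div_assoc', ← Real.rpow_add hg0, hsum, Real.rpow_one]
  -- C * rateP g ≤ g/2 + 4C² L^p
  have hCne : C ≠ 0 := by linarith
  have hCrg : C * rateP β L g ≤ g / 2 + 4 * C ^ 2 * L ^ p := by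
    rw [rateP, ← hp_def, ← hq_def, mul_max_of_nonneg _ _ (by linarith : (0:ℝ) ≤ C)]
    apply max_le
    · have h6 : C ≤ 4 * C ^ 2 := by nlinarith [sq_nonneg (C - 1)]
      have h7 := mul_le_mul_of_nonneg_right h6 hA0.le
      linarith [hg]
    · have hF1' : (g * L) ^ q ≤ g / (2 * C) + 2 * C * L ^ p :=
        F1.trans (max_le (le_add_of_nonneg_right (by positivity))
          (le_add_of_nonneg_left (by positivity)))
      have e1 : C * (g / (2 * C)) = g / 2 := by
        field_simp
      calc C * (g * L) ^ q ≤ C * (g / (2 * C) + 2 * C * L ^ p) :=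
            mul_le_mul_of_nonneg_left hF1' (by linarith)
        _ = g / 2 + 2 * C ^ 2 * L ^ p := by rw [mul_add, e1]; ring
        _ ≤ g / 2 + 4 * C ^ 2 * L ^ p := by nlinarith [hA0.le]
  -- bounds from hypothesis
  obtain ⟨habs1, habs2⟩ := abs_le.mp hbound
  have hub : ghat ≤ g + C * rateP β L g := by linarith
  have hlb : g ≤ ghat + C * rateP β L g := by linarith
  -- upper : rateP ghat ≤ (1+C) rateP g
  have hCq : C ^ q ≤ C := by
    have h5 := Real.rpow_le_rpow_of_exponent_le hC hq1.le
    rwa [Real.rpow_one] at h5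
  have hCrg0 : 0 ≤ C * rateP β L g := by positivity
  have step : (ghat * L) ^ q ≤ (1 + C) * rateP β L g := by
    calc (ghat * L) ^ q ≤ ((g + C * rateP β L g) * L) ^ q :=
          Real.rpow_le_rpow (by positivity)
            (mul_le_mul_of_nonneg_right hub hL.le) hq0.le
      _ = (g * L + C * rateP β L g * L) ^ q := by ring_nf
      _ ≤ (g * L) ^ q + (C * rateP β L g * L) ^ q :=
          my_rpow_add_le (by positivity) (by positivity) hq0.le hq1.le
      _ ≤ rateP β L g + C * rateP β L g := by
          apply add_le_add (le_max_right _ _)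
          calc (C * rateP β L g * L) ^ q
              = C ^ q * (rateP β L g * L) ^ q := by
                rw [mul_assoc, Real.mul_rpow (by linarith) (by positivity)]
            _ ≤ C * rateP β L g := by
                apply mul_le_mul hCq (F2 _ hrg_ge) (by positivity) (by linarith)
      _ = (1 + C) * rateP β L g := by ring
  have upper : rateP β L ghat ≤ (1 + C) * rateP β L g := by
    apply max_le
    · exact hrg_ge.trans (le_mul_of_one_le_left hrg0.le (by linarith))
    · exact step
  -- lower : rateP g ≤ (8C²+2) rateP ghat
  have hg2 : g ≤ 2 * ghat + 8 * C ^ 2 * L ^ p := by linarith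
  have h2q : (2:ℝ) ^ q ≤ 2 := by
    have h5 := Real.rpow_le_rpow_of_exponent_le (by norm_num : (1:ℝ) ≤ 2) hq1.le
    rwa [Real.rpow_one] at h5
  have h8q : (8 * C ^ 2 : ℝ) ^ q ≤ 8 * C ^ 2 := by
    have h5 := Real.rpow_le_rpow_of_exponent_le (by nlinarith [sq_nonneg (C - 1)] : (1:ℝ) ≤ 8 * C ^ 2) hq1.le
    rwa [Real.rpow_one] at h5
  have step2 : (g * L) ^ q ≤ (8 * C ^ 2 + 2) * rateP β L ghat := by
    calc (g * L) ^ q ≤ ((2 * ghat + 8 * C ^ 2 * L ^ p) * L) ^ q :=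
          Real.rpow_le_rpow (by positivity)
            (mul_le_mul_of_nonneg_right hg2 hL.le) hq0.le
      _ = (2 * (ghat * L) + 8 * C ^ 2 * (L ^ p * L)) ^ q := by ring_nf
      _ ≤ (2 * (ghat * L)) ^ q + (8 * C ^ 2 * (L ^ p * L)) ^ q :=
          my_rpow_add_le (by positivity) (by positivity) hq0.le hq1.le
      _ ≤ 2 * (ghat * L) ^ q + 8 * C ^ 2 * (L ^ p * L) ^ q := by
          apply add_le_add
          · rw [Real.mul_rpow (by norm_num) (by positivity)]
            exact mul_le_mul_of_nonneg_right h2q (by positivity)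
          · rw [Real.mul_rpow (by positivity) (by positivity)]
            exact mul_le_mul_of_nonneg_right h8q (by positivity)
      _ = 2 * (ghat * L) ^ q + 8 * C ^ 2 * L ^ p := by rw [hLp1]
      _ ≤ 2 * rateP β L ghat + 8 * C ^ 2 * rateP β L ghat := by
          apply add_le_add
          · exact mul_le_mul_of_nonneg_left (le_max_right _ _) (by norm_num)
          · exact mul_le_mul_of_nonneg_left hrgh_ge (by positivity)
      _ = (8 * C ^ 2 + 2) * rateP β L ghat := by ring
  have lower : rateP β L g ≤ (8 * C ^ 2 + 2) * rateP β L ghat := by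
    apply max_le
    · exact hrgh_ge.trans (le_mul_of_one_le_left hrgh0.le (by nlinarith [sq_nonneg C]))
    · exact step2
  constructor
  · rw [inv_mul_le_iff₀ (by positivity)]
    refine upper.trans ?_
    apply mul_le_mul_of_nonneg_right _ hrg0.le
    nlinarith [sq_nonneg (C - 1)]
  · exact lower
end
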